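/- arXiv:1205.6974 — 5 statements merged into one kernel-verified Lean document; each statement's English description precedes it below -/
import Mathlib

section
/- Let X = (X_1, X_2, …) be an iid Bernoulli(1/2) binary process, and let L be a random positive integer with an arbitrary conditional distribution given X (i.e., L may depend on the entire sequence X). Then the Shannon entropy (base 2) of the random finite binary string X^L = (X_1, …, X_L), viewed as a random element of the set of finite binary strings, satisfies H(X^L) ≥ E[L] (both sides possibly infinite). -/
open MeasureTheory ProbabilityTheory
open scoped ENNReal

/-- The paper's Selection Lemma (Lemma 2): if `X` is an iid Bernoulli(1/2) binary process
and `L` is an arbitrary random positive integer (possibly depending on the whole sequence),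
then the Shannon entropy (base 2) of the random finite string `X^L = (X_1, …, X_L)`
is at least `E[L]` (both sides possibly infinite). -/
theorem selection_lemma
    {Ω : Type*} [MeasurableSpace Ω] (μ : Measure Ω) [IsProbabilityMeasure μ]
    (X : ℕ → Ω → Bool) (hXmeas : ∀ i, Measurable (X i))
    (hXindep : iIndepFun X μ)
    (hXbern : ∀ i, μ {ω | X i ω = true} = 1/2)
    (L : Ω → ℕ) (hLmeas : Measurable L) (hLpos : ∀ ω, 1 ≤ L ω) :
    (∫⁻ ω, (L ω : ℝ≥0∞) ∂μ) ≤
      ∑' w : List Bool,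
        μ {ω | List.ofFn (fun j : Fin (L ω) => X (j : ℕ) ω) = w} *
          ENNReal.ofReal
            (- Real.logb 2
              (μ {ω | List.ofFn (fun j : Fin (L ω) => X (j : ℕ) ω) = w}).toReal) := by
  classical
  set A : List Bool → Set Ω :=
    fun w => {ω | List.ofFn (fun j : Fin (L ω) => X (j : ℕ) ω) = w} with hA_def
  -- characterization of membership
  have hchar : ∀ w ω, ω ∈ A w ↔
      (L ω = w.length ∧ ∀ i, ∀ h : i < w.length, X i ω = w[i]) := by
    intro w ω
    constructor
    · intro h
      subst h
      refine ⟨by simp, fun i hi => ?_⟩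
      rw [List.getElem_ofFn]
    · rintro ⟨hlen, helem⟩
      refine List.ext_getElem (by simpa using hlen) ?_
      intro n h1 h2
      rw [List.getElem_ofFn]
      exact helem n h2
  -- measurability of A w
  have hXb : ∀ i (b : Bool), MeasurableSet {ω | X i ω = b} := by
    intro i b
    exact (hXmeas i) (measurableSet_singleton b)
  have hAset : ∀ w, A w = (L ⁻¹' {w.length}) ∩
      ⋂ i ∈ Finset.range w.length, {ω | X i ω = w.getD i false} := by
    intro w
    ext ω
    simp only [Set.mem_inter_iff, Set.mem_preimage, Set.mem_singleton_iff,
      Set.mem_iInter, Finset.mem_range, hchar, Set.mem_setOf_eq]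
    constructor
    · rintro ⟨h1, h2⟩
      exact ⟨h1, fun i hi => by rw [List.getD_eq_getElem _ _ hi]; exact h2 i hi⟩
    · rintro ⟨h1, h2⟩
      exact ⟨h1, fun i hi => by rw [← List.getD_eq_getElem _ _ hi]; exact h2 i hi⟩
  have hAmeas : ∀ w, MeasurableSet (A w) := by
    intro w
    rw [hAset]
    exact (hLmeas (measurableSet_singleton _)).inter
      (Finset.measurableSet_biInter _ (fun i _ => hXb i _))
  -- each single-bit event has probability 1/2
  have hb : ∀ i (b : Bool), μ {ω | X i ω = b} = 1 / 2 := by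
    intro i b
    cases b
    · have hcompl : {ω | X i ω = false} = {ω | X i ω = true}ᶜ := by
        ext ω; simp
      rw [hcompl, prob_compl_eq_one_sub (hXb i true), hXbern i]
      rw [show (1 : ℝ≥0∞) / 2 = 1 / 2 from rfl]
      simpa using ENNReal.sub_half (a := 1) one_ne_top
    · exact hXbern i
  -- probability bound
  have hbound : ∀ w, μ (A w) ≤ (1 / 2 : ℝ≥0∞) ^ w.length := by
    intro w
    have hsub : A w ⊆ ⋂ i ∈ Finset.range w.length, {ω | X i ω = w.getD i false} := by
      rw [hAset]; exact Set.inter_subset_right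
    refine le_trans (measure_mono hsub) ?_
    have := hXindep.meas_biInter (S := Finset.range w.length)
      (s := fun i => {ω | X i ω = w.getD i false})
      (fun i _ => ⟨{w.getD i false}, measurableSet_singleton _, rfl⟩)
    rw [this]
    rw [Finset.prod_congr rfl (fun i _ => hb i (w.getD i false)),
      Finset.prod_const, Finset.card_range]
  -- termwise entropy bound
  have hterm : ∀ w : List Bool,
      μ (A w) * (w.length : ℝ≥0∞) ≤
        μ (A w) * ENNReal.ofReal (- Real.logb 2 (μ (A w)).toReal) := by
    intro w
    rcases eq_or_ne (μ (A w)) 0 with h0 | h0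
    · simp [h0]
    refine mul_le_mul_right ?_ _
    set p : ℝ := (μ (A w)).toReal with hp
    have hple : p ≤ (1 / 2 : ℝ) ^ w.length := by
      have := ENNReal.toReal_mono (ENNReal.pow_ne_top (by simp)) (hbound w)
      simpa [ENNReal.toReal_pow] using this
    have hppos : 0 < p := ENNReal.toReal_pos h0 (measure_ne_top μ _)
    have hlog : Real.logb 2 p ≤ -(w.length : ℝ) := by
      have h1 : Real.logb 2 p ≤ Real.logb 2 ((1 / 2 : ℝ) ^ w.length) :=
        Real.logb_le_logb_of_le one_lt_two hppos hple
      have h2 : Real.logb 2 ((1 / 2 : ℝ) ^ w.length) = -(w.length : ℝ) := by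
        rw [Real.logb_pow, one_div, Real.logb_inv, Real.logb_self_eq_one one_lt_two]
        ring
      linarith
    calc (w.length : ℝ≥0∞) = ENNReal.ofReal (w.length : ℝ) := by
          simp
      _ ≤ ENNReal.ofReal (- Real.logb 2 p) :=
          ENNReal.ofReal_le_ofReal (by linarith)
  -- the sets A w partition Ω
  have hU : (⋃ w : List Bool, A w) = Set.univ := by
    ext ω
    simp only [Set.mem_iUnion, Set.mem_univ, iff_true]
    exact ⟨List.ofFn (fun j : Fin (L ω) => X (j : ℕ) ω), rfl⟩
  have hdisj : Pairwise (Function.onFun Disjoint A) := by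
    intro w w' hww'
    refine Set.disjoint_left.mpr (fun ω hw hw' => hww' ?_)
    rw [← hw, ← hw']
  -- compute the integral of L as a sum over words
  have hint : (∫⁻ ω, (L ω : ℝ≥0∞) ∂μ) = ∑' w : List Bool, μ (A w) * (w.length : ℝ≥0∞) := by
    rw [← setLIntegral_univ, ← hU, lintegral_iUnion hAmeas hdisj]
    refine tsum_congr fun w => ?_
    rw [setLIntegral_congr_fun (hAmeas w)
      (fun ω hω => ?_), setLIntegral_const, mul_comm]
    exact_mod_cast ((hchar w ω).mp hω).1
  rw [hint]
  exact Summable.tsum_le_tsum hterm ENNReal.summable ENNReal.summable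
end

section
/- Suppose {X_i}_{i≥1} is a sequence of iid Bernoulli(p) random variables and {α_i}_{i≥1} is a bounded sequence of real numbers. Then with probability one, limsup_{n→∞} (1/n) Σ_{i=1}^n α_i X_i = p · limsup_{n→∞} (1/n) Σ_{i=1}^n α_i, and liminf_{n→∞} (1/n) Σ_{i=1}^n α_i X_i = p · liminf_{n→∞} (1/n) Σ_{i=1}^n α_i. -/
open MeasureTheory ProbabilityTheory Filter
open scoped ENNReal

section WSLaux

open Filter Finset

lemma WSL.bdd_above_of_abs {u : ℕ → ℝ} {A : ℝ} (hu : ∀ n, |u n| ≤ A) :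
    IsBoundedUnder (· ≤ ·) atTop u :=
  isBoundedUnder_of ⟨A, fun n => (abs_le.1 (hu n)).2⟩

lemma WSL.bdd_below_of_abs {u : ℕ → ℝ} {A : ℝ} (hu : ∀ n, |u n| ≤ A) :
    IsBoundedUnder (· ≥ ·) atTop u :=
  isBoundedUnder_of ⟨-A, fun n => (abs_le.1 (hu n)).1⟩

lemma WSL.limsup_add_tendsto_zero {u v : ℕ → ℝ} {A : ℝ} (hu : ∀ n, |u n| ≤ A)
    (hv : Tendsto v atTop (nhds 0)) :
    limsup (fun n => u n + v n) atTop = limsup u atTop := by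
  have hub := WSL.bdd_above_of_abs hu
  have hlb := WSL.bdd_below_of_abs hu
  have hvub := hv.isBoundedUnder_le
  have hvlb := hv.isBoundedUnder_ge
  have hsub : IsBoundedUnder (· ≤ ·) atTop (fun n => u n + v n) :=
    isBoundedUnder_le_add hub hvub
  have hslb : IsBoundedUnder (· ≥ ·) atTop (fun n => u n + v n) :=
    isBoundedUnder_ge_add hlb hvlb
  apply le_antisymm
  · have h := limsup_add_le (u := u) (v := v) hlb hub hvlb.isCoboundedUnder_le hvub
    rwa [hv.limsup_eq, add_zero] at h
  · have h := limsup_add_le (u := fun n => u n + v n) (v := fun n => -v n)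
      hslb hsub (hv.neg.isBoundedUnder_ge.isCoboundedUnder_le) hv.neg.isBoundedUnder_le
    have h2 : limsup (fun n => -v n) atTop = 0 := by
      simpa using hv.neg.limsup_eq
    simp only [h2, add_zero] at h
    convert h using 2
    funext n; simp

lemma WSL.liminf_add_tendsto_zero {u v : ℕ → ℝ} {A : ℝ} (hu : ∀ n, |u n| ≤ A)
    (hv : Tendsto v atTop (nhds 0)) :
    liminf (fun n => u n + v n) atTop = liminf u atTop := by
  have hub := WSL.bdd_above_of_abs hu
  have hlb := WSL.bdd_below_of_abs hu
  have hvub := hv.isBoundedUnder_le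
  have hvlb := hv.isBoundedUnder_ge
  have hsub : IsBoundedUnder (· ≤ ·) atTop (fun n => u n + v n) :=
    isBoundedUnder_le_add hub hvub
  have hslb : IsBoundedUnder (· ≥ ·) atTop (fun n => u n + v n) :=
    isBoundedUnder_ge_add hlb hvlb
  apply le_antisymm
  · have h := le_liminf_add (u := fun n => u n + v n) (v := fun n => -v n)
      hslb hsub hv.neg.isBoundedUnder_ge hv.neg.isBoundedUnder_le.isCoboundedUnder_ge
    have h2 : liminf (fun n => -v n) atTop = 0 := by
      simpa using hv.neg.liminf_eq
    rw [h2, add_zero] at h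
    refine le_trans (le_of_le_of_eq h ?_) le_rfl
    congr 1
    funext n; simp
  · have h := le_liminf_add (u := u) (v := v) hlb hub hvlb hvub.isCoboundedUnder_ge
    rwa [hv.liminf_eq, add_zero] at h

lemma WSL.limsup_const_mul {u : ℕ → ℝ} {p A : ℝ} (hp : 0 ≤ p) (hu : ∀ n, |u n| ≤ A) :
    limsup (fun n => p * u n) atTop = p * limsup u atTop := by
  have hmono : Monotone (fun x : ℝ => p * x) := fun a b h => mul_le_mul_of_nonneg_left h hp
  have h := hmono.map_limsSup_of_continuousAt (F := Filter.map u atTop)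
    (continuous_const.mul continuous_id).continuousAt
    (WSL.bdd_above_of_abs hu) ((WSL.bdd_below_of_abs hu).isCoboundedUnder_le)
  have h2 : limsup (fun n => p * u n) atTop = limsup (fun x : ℝ => p * x) (Filter.map u atTop) := by
    rw [Filter.limsup, Filter.limsup, Filter.map_map]
    rfl
  rw [h2, ← h]
  rfl

lemma WSL.liminf_const_mul {u : ℕ → ℝ} {p A : ℝ} (hp : 0 ≤ p) (hu : ∀ n, |u n| ≤ A) :
    liminf (fun n => p * u n) atTop = p * liminf u atTop := by
  have hmono : Monotone (fun x : ℝ => p * x) := fun a b h => mul_le_mul_of_nonneg_left h hp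
  have h := hmono.map_limsInf_of_continuousAt (F := Filter.map u atTop)
    (continuous_const.mul continuous_id).continuousAt
    ((WSL.bdd_above_of_abs hu).isCoboundedUnder_ge) (WSL.bdd_below_of_abs hu)
  have h2 : liminf (fun n => p * u n) atTop = liminf (fun x : ℝ => p * x) (Filter.map u atTop) := by
    rw [Filter.liminf, Filter.liminf, Filter.map_map]
    rfl
  rw [h2, ← h]
  rfl

lemma WSL.avg_abs_le {β : ℕ → ℝ} {A : ℝ} (hA : 0 ≤ A) (h : ∀ i, |β i| ≤ A) (n : ℕ) :
    |(1 / (n : ℝ)) * ∑ i ∈ Finset.range n, β i| ≤ A := by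
  rcases Nat.eq_zero_or_pos n with rfl | hn
  · simpa using hA
  · have hsum : |∑ i ∈ Finset.range n, β i| ≤ n * A := by
      calc |∑ i ∈ Finset.range n, β i| ≤ ∑ i ∈ Finset.range n, |β i| :=
            Finset.abs_sum_le_sum_abs _ _
        _ ≤ ∑ _i ∈ Finset.range n, A := Finset.sum_le_sum fun i _ => h i
        _ = n * A := by simp [mul_comm]
    have hn' : (0:ℝ) < n := by exact_mod_cast hn
    rw [abs_mul, abs_of_nonneg (by positivity : (0:ℝ) ≤ 1/(n:ℝ))]
    calc (1/(n:ℝ)) * |∑ i ∈ Finset.range n, β i| ≤ (1/(n:ℝ)) * (n * A) := by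
          apply mul_le_mul_of_nonneg_left hsum (by positivity)
      _ = A := by field_simp

lemma WSL.gap_lemma {Y : ℕ → ℝ} {A : ℝ} (hA : 0 ≤ A) (hY : ∀ i, |Y i| ≤ A)
    (h : Tendsto (fun m : ℕ => (∑ i ∈ Finset.range ((m+1)^2), Y i) / (((m:ℝ)+1)^2))
      atTop (nhds 0)) :
    Tendsto (fun n : ℕ => (∑ i ∈ Finset.range n, Y i) / (n:ℝ)) atTop (nhds 0) := by
  set T : ℕ → ℝ := fun m => (∑ i ∈ Finset.range (m^2), Y i) / ((m:ℝ)^2) with hTdef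
  have hT : Tendsto T atTop (nhds 0) := by
    rw [← tendsto_add_atTop_iff_nat 1]
    convert h using 2 with m
    simp only [hTdef]
    push_cast
    ring_nf
  have hsqrt : Tendsto Nat.sqrt atTop atTop :=
    tendsto_atTop_atTop.2 fun b => ⟨b * b, fun n hn => Nat.le_sqrt.2 hn⟩
  have hfrac : Tendsto (fun m : ℕ => A * (2 * (m:ℝ) + 1) / ((m:ℝ)^2)) atTop (nhds 0) := by
    have h1 : Tendsto (fun m : ℕ => (1:ℝ)/(m:ℝ)) atTop (nhds 0) :=
      tendsto_one_div_atTop_nhds_zero_nat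
    have h2 : Tendsto (fun m : ℕ => A * (2 * ((1:ℝ)/(m:ℝ)) + ((1:ℝ)/(m:ℝ))^2)) atTop
        (nhds (A * (2 * 0 + 0^2))) := by
      exact (((h1.const_mul 2).add (h1.pow 2)).const_mul A)
    rw [show A * (2 * (0:ℝ) + 0^2) = 0 by ring] at h2
    apply h2.congr'
    filter_upwards [eventually_ge_atTop 1] with m hm
    have hm' : (0:ℝ) < (m:ℝ) := by exact_mod_cast hm
    field_simp
  have hg : Tendsto (fun n : ℕ => |T (Nat.sqrt n)| +
      A * (2 * ((Nat.sqrt n : ℕ):ℝ) + 1) / (((Nat.sqrt n : ℕ):ℝ)^2)) atTop (nhds 0) := by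
    have := ((hT.abs.add hfrac).comp hsqrt)
    simpa only [abs_zero, add_zero, Function.comp_def] using this
  apply squeeze_zero_norm' ?_ hg
  filter_upwards [eventually_ge_atTop 1] with n hn
  set m := Nat.sqrt n with hmdef
  have hm1 : 1 ≤ m := Nat.le_sqrt.2 (by simpa using hn)
  have hmn : m^2 ≤ n := by
    have := Nat.sqrt_le' n
    simpa [pow_two, hmdef] using this
  have hn2 : n ≤ m^2 + 2*m := by
    have := Nat.lt_succ_sqrt' n
    have h3 : n.sqrt.succ ^ 2 = m^2 + 2*m + 1 := by
      rw [Nat.succ_eq_add_one, ← hmdef]; ring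
    omega
  have hsplit : ∑ i ∈ Finset.range n, Y i
      = ∑ i ∈ Finset.range (m^2), Y i + ∑ i ∈ Finset.Ico (m^2) n, Y i := by
    rw [Finset.range_eq_Ico, Finset.range_eq_Ico]
    exact (Finset.sum_Ico_consecutive _ (Nat.zero_le _) hmn).symm
  have hico : |∑ i ∈ Finset.Ico (m^2) n, Y i| ≤ (2*(m:ℝ)+1) * A := by
    calc |∑ i ∈ Finset.Ico (m^2) n, Y i| ≤ ∑ i ∈ Finset.Ico (m^2) n, |Y i| :=
          Finset.abs_sum_le_sum_abs _ _
      _ ≤ ∑ _i ∈ Finset.Ico (m^2) n, A := Finset.sum_le_sum fun i _ => hY i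
      _ = ((n - m^2 : ℕ) : ℝ) * A := by simp [Nat.card_Ico, mul_comm]
      _ ≤ (2*(m:ℝ)+1) * A := by
          apply mul_le_mul_of_nonneg_right _ hA
          have : (n - m^2 : ℕ) ≤ 2*m + 1 := by omega
          exact_mod_cast le_trans (Nat.cast_le.2 this) (by push_cast; linarith)
  have hm' : (0:ℝ) < (m:ℝ)^2 := by positivity
  have hn' : (0:ℝ) < (n:ℝ) := by exact_mod_cast hn
  have hSn : |∑ i ∈ Finset.range n, Y i| ≤ |∑ i ∈ Finset.range (m^2), Y i| + (2*(m:ℝ)+1) * A := by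
    rw [hsplit]
    exact le_trans (abs_add_le _ _) (by linarith)
  have hmncast : ((m:ℝ))^2 ≤ (n:ℝ) := by exact_mod_cast hmn
  have hTm : |T m| = |∑ i ∈ Finset.range (m^2), Y i| / (m:ℝ)^2 := by
    simp only [hTdef]
    rw [abs_div, abs_of_pos hm']
  rw [Real.norm_eq_abs, abs_div, abs_of_pos hn']
  calc |∑ i ∈ Finset.range n, Y i| / (n:ℝ)
      ≤ (|∑ i ∈ Finset.range (m^2), Y i| + (2*(m:ℝ)+1) * A) / (n:ℝ) := by
        gcongr
      _ ≤ (|∑ i ∈ Finset.range (m^2), Y i| + (2*(m:ℝ)+1) * A) / ((m:ℝ)^2) := by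
        gcongr
      _ = |T m| + A * (2*(m:ℝ)+1) / ((m:ℝ)^2) := by
        rw [hTm]; ring

end WSLaux

/-- The paper's Lemma 8: for an iid Bernoulli(p) process `X` and a bounded real
sequence `α`, almost surely
`limsup (1/n) ∑_{i<n} α i X i = p * limsup (1/n) ∑_{i<n} α i` and likewise
for the liminf. -/
theorem weighted_strong_law
    {Ω : Type*} [MeasurableSpace Ω] (μ : Measure Ω) [IsProbabilityMeasure μ]
    (p : ℝ) (hp0 : 0 ≤ p) (hp1 : p ≤ 1)
    (X : ℕ → Ω → Bool) (hXmeas : ∀ i, Measurable (X i))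
    (hXindep : iIndepFun X μ)
    (hXbern : ∀ i, μ {ω | X i ω = true} = ENNReal.ofReal p)
    (α : ℕ → ℝ) (hαbd : ∃ A, ∀ i, |α i| ≤ A) :
    ∀ᵐ ω ∂μ,
      (Filter.limsup
          (fun n : ℕ => (1 / (n : ℝ)) * ∑ i ∈ Finset.range n,
            α i * (if X i ω = true then (1 : ℝ) else 0)) atTop
        = p * Filter.limsup
            (fun n : ℕ => (1 / (n : ℝ)) * ∑ i ∈ Finset.range n, α i) atTop)
      ∧ (Filter.liminf
          (fun n : ℕ => (1 / (n : ℝ)) * ∑ i ∈ Finset.range n,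
            α i * (if X i ω = true then (1 : ℝ) else 0)) atTop
        = p * Filter.liminf
            (fun n : ℕ => (1 / (n : ℝ)) * ∑ i ∈ Finset.range n, α i) atTop) := by
  classical
  obtain ⟨A, hA⟩ := hαbd
  have hA0 : 0 ≤ A := le_trans (abs_nonneg _) (hA 0)
  -- the centered variables
  set g : ℕ → Bool → ℝ := fun i b => α i * ((if b then 1 else 0) - p) with hgdef
  set Y : ℕ → Ω → ℝ := fun i => g i ∘ X i with hYdef
  have hgm : ∀ i, Measurable (g i) := fun i => measurable_of_countable _
  have hYmeas : ∀ i, Measurable (Y i) := fun i => (hgm i).comp (hXmeas i)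
  have hYindep : iIndepFun Y μ := hXindep.comp g hgm
  have hYbd : ∀ i ω, |Y i ω| ≤ A := by
    intro i ω
    have h1 : |(if X i ω then (1:ℝ) else 0) - p| ≤ 1 := by
      rcases Bool.eq_false_or_eq_true (X i ω) with hb | hb <;>
        simp [hb, abs_le] <;> constructor <;> linarith
    calc |Y i ω| = |α i| * |(if X i ω then (1:ℝ) else 0) - p| := by
          simp only [hYdef, hgdef, Function.comp_apply, abs_mul]
      _ ≤ A * 1 := mul_le_mul (hA i) h1 (abs_nonneg _) hA0
      _ = A := mul_one A
  -- integral computations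
  have hind : ∀ i, ∫ ω, (if X i ω = true then (1:ℝ) else 0) ∂μ = p := by
    intro i
    have hs : MeasurableSet (X i ⁻¹' {true}) := hXmeas i (MeasurableSet.singleton true)
    have heq : (fun ω => if X i ω = true then (1:ℝ) else 0)
        = (X i ⁻¹' {true}).indicator (1 : Ω → ℝ) := by
      funext ω
      simp [Set.indicator_apply, Set.mem_preimage]
    rw [heq, integral_indicator_one hs]
    have : X i ⁻¹' {true} = {ω | X i ω = true} := by
      ext ω; simp
    rw [this, measureReal_def, hXbern i, ENNReal.toReal_ofReal hp0]
  have hindint : ∀ i, Integrable (fun ω => if X i ω = true then (1:ℝ) else 0) μ := by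
    intro i
    have hs : MeasurableSet (X i ⁻¹' {true}) := hXmeas i (MeasurableSet.singleton true)
    have heq : (fun ω => if X i ω = true then (1:ℝ) else 0)
        = (X i ⁻¹' {true}).indicator (1 : Ω → ℝ) := by
      funext ω
      simp [Set.indicator_apply, Set.mem_preimage]
    rw [heq]
    exact (integrable_const 1).indicator hs
  have hYmem : ∀ i, MemLp (Y i) 2 μ := fun i =>
    MemLp.of_bound (hYmeas i).aestronglyMeasurable A
      (ae_of_all _ fun ω => by rw [Real.norm_eq_abs]; exact hYbd i ω)
  have hYint : ∀ i, Integrable (Y i) μ := fun i => (hYmem i).integrable one_le_two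
  have hYmean : ∀ i, ∫ ω, Y i ω ∂μ = 0 := by
    intro i
    have hYeq : Y i = fun ω => α i * (if X i ω = true then (1:ℝ) else 0) - α i * p := by
      funext ω
      simp only [hYdef, hgdef, Function.comp_apply]
      ring
    rw [hYeq, integral_sub ((hindint i).const_mul _) (integrable_const _),
      integral_const_mul, hind i, integral_const]
    simp
  have hYvar : ∀ i, variance (Y i) μ ≤ A^2 := by
    intro i
    refine le_trans (variance_le_expectation_sq (hYmeas i).aestronglyMeasurable) ?_
    have heq : (Y i ^ 2 : Ω → ℝ) = fun ω => Y i ω ^ 2 := by funext ω; simp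
    rw [heq]
    calc ∫ ω, Y i ω ^ 2 ∂μ ≤ ∫ _ω, A^2 ∂μ := by
          apply integral_mono ((hYmem i).integrable_sq) (integrable_const _)
          intro ω
          have := hYbd i ω
          exact sq_le_sq' (abs_le.1 this).1 (abs_le.1 this).2
      _ = A^2 := by simp
  -- partial sums
  set S : ℕ → Ω → ℝ := fun n => ∑ i ∈ Finset.range n, Y i with hSdef
  have hSmem : ∀ n, MemLp (S n) 2 μ := fun n => memLp_finset_sum' _ fun i _ => hYmem i
  have hSmean : ∀ n, μ[S n] = 0 := by
    intro n
    have hSfun : S n = fun ω => ∑ i ∈ Finset.range n, Y i ω := by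
      funext ω; simp [hSdef, Finset.sum_apply]
    rw [hSfun, integral_finset_sum _ fun i _ => hYint i,
      Finset.sum_eq_zero fun i _ => hYmean i]
  have hSvar : ∀ n, variance (S n) μ ≤ n * A^2 := by
    intro n
    rw [hSdef, IndepFun.variance_sum (fun i _ => hYmem i)
      (fun i _ j _ hij => hYindep.indepFun hij)]
    calc ∑ i ∈ Finset.range n, variance (Y i) μ ≤ ∑ _i ∈ Finset.range n, A^2 :=
          Finset.sum_le_sum fun i _ => hYvar i
      _ = n * A^2 := by simp [mul_comm]
  -- Chebyshev + Borel-Cantelli along squares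
  have hBC : ∀ k : ℕ, ∀ᵐ ω ∂μ, ∀ᶠ m : ℕ in atTop,
      ¬ (((m:ℝ)+1)^2 * (1/((k:ℝ)+1)) ≤ |S ((m+1)^2) ω|) := by
    intro k
    set ε : ℝ := 1/((k:ℝ)+1) with hεdef
    have hε : 0 < ε := by positivity
    set C : ℕ → Set Ω := fun m => {ω | ((m:ℝ)+1)^2 * ε ≤ |S ((m+1)^2) ω|} with hCdef
    have hCb : ∀ m, μ (C m) ≤ ENNReal.ofReal ((A^2/ε^2) * (1/((m:ℝ)+1)^2)) := by
      intro m
      have hc : (0:ℝ) < ((m:ℝ)+1)^2 * ε := by positivity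
      have h := meas_ge_le_variance_div_sq (hSmem ((m+1)^2)) hc
      rw [hSmean] at h
      simp only [sub_zero] at h
      refine le_trans h (ENNReal.ofReal_le_ofReal ?_)
      have hvb : variance (S ((m+1)^2)) μ ≤ ((m:ℝ)+1)^2 * A^2 := by
        refine le_trans (hSvar ((m+1)^2)) ?_
        gcongr ?_ * A^2
        push_cast
        nlinarith [Nat.cast_nonneg (α := ℝ) m]
      calc variance (S ((m+1)^2)) μ / (((m:ℝ)+1)^2 * ε)^2
          ≤ (((m:ℝ)+1)^2 * A^2) / (((m:ℝ)+1)^2 * ε)^2 := by gcongr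
        _ = (A^2/ε^2) * (1/((m:ℝ)+1)^2) := by
            field_simp
    have hsum : Summable (fun m : ℕ => (A^2/ε^2) * (1/((m:ℝ)+1)^2)) := by
      apply Summable.mul_left
      have h2 : Summable (fun n : ℕ => 1/((n:ℝ))^2) := by
        have := Real.summable_one_div_nat_pow (p := 2)
        exact this.2 (by norm_num)
      have := (summable_nat_add_iff 1).2 h2
      exact this.congr fun n => by push_cast; ring
    have htsum : (∑' m, μ (C m)) ≠ ∞ := by
      refine ne_top_of_le_ne_top ?_ (ENNReal.tsum_le_tsum hCb)
      rw [← ENNReal.ofReal_tsum_of_nonneg (fun m => by positivity) hsum]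
      exact ENNReal.ofReal_ne_top
    have := MeasureTheory.ae_eventually_notMem htsum
    filter_upwards [this] with ω hω
    filter_upwards [hω] with m hm
    exact hm
  have hae : ∀ᵐ ω ∂μ, ∀ k : ℕ, ∀ᶠ m : ℕ in atTop,
      ¬ (((m:ℝ)+1)^2 * (1/((k:ℝ)+1)) ≤ |S ((m+1)^2) ω|) := ae_all_iff.2 hBC
  filter_upwards [hae] with ω hω
  -- a.s. convergence of S n / n to 0
  have htendS : Tendsto (fun m : ℕ => S ((m+1)^2) ω / (((m:ℝ)+1)^2)) atTop (nhds 0) := by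
    rw [NormedAddCommGroup.tendsto_nhds_zero]
    intro ε hε
    obtain ⟨k, hk⟩ := exists_nat_one_div_lt hε
    filter_upwards [hω k] with m hm
    rw [Real.norm_eq_abs, abs_div, abs_of_pos (by positivity : (0:ℝ) < ((m:ℝ)+1)^2)]
    rw [div_lt_iff₀ (by positivity : (0:ℝ) < ((m:ℝ)+1)^2)]
    push_neg at hm
    calc |S ((m+1)^2) ω| < ((m:ℝ)+1)^2 * (1/((k:ℝ)+1)) := hm
      _ ≤ ε * ((m:ℝ)+1)^2 := by
          rw [mul_comm]
          gcongr
  have htend : Tendsto (fun n : ℕ => (∑ i ∈ Finset.range n, Y i ω) / (n:ℝ)) atTop (nhds 0) := by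
    apply WSL.gap_lemma hA0 (fun i => hYbd i ω)
    convert htendS using 2 with m
    simp [hSdef, Finset.sum_apply]
  have htend' : Tendsto (fun n : ℕ => (1/(n:ℝ)) * ∑ i ∈ Finset.range n, Y i ω)
      atTop (nhds 0) := by
    exact htend.congr fun n => (one_div_mul_eq_div _ _).symm
  set u : ℕ → ℝ := fun n => (1/(n:ℝ)) * ∑ i ∈ Finset.range n, α i with hudef
  set e : ℕ → ℝ := fun n => (1/(n:ℝ)) * ∑ i ∈ Finset.range n, Y i ω with hedef
  have hu : ∀ n, |u n| ≤ A := fun n => WSL.avg_abs_le hA0 hA n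
  have hpu : ∀ n, |p * u n| ≤ A := by
    intro n
    rw [abs_mul]
    calc |p| * |u n| ≤ 1 * A :=
          mul_le_mul (abs_le.2 ⟨by linarith, hp1⟩) (hu n) (abs_nonneg _) zero_le_one
      _ = A := one_mul A
  have hseq : ∀ n : ℕ,
      (1/(n:ℝ)) * ∑ i ∈ Finset.range n, α i * (if X i ω = true then (1:ℝ) else 0)
      = p * u n + e n := by
    intro n
    have hsum : ∑ i ∈ Finset.range n, Y i ω
        = ∑ i ∈ Finset.range n, α i * (if X i ω = true then (1:ℝ) else 0)
          - p * ∑ i ∈ Finset.range n, α i := by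
      rw [Finset.mul_sum, ← Finset.sum_sub_distrib]
      apply Finset.sum_congr rfl
      intro i _
      simp only [hYdef, hgdef, Function.comp_apply]
      ring
    rw [hedef, hudef]
    simp only []
    rw [hsum]
    ring
  have hfun : (fun n : ℕ =>
      (1/(n:ℝ)) * ∑ i ∈ Finset.range n, α i * (if X i ω = true then (1:ℝ) else 0))
      = fun n => p * u n + e n := funext hseq
  have htende : Tendsto e atTop (nhds 0) := htend'
  refine ⟨?_, ?_⟩
  · rw [hfun, WSL.limsup_add_tendsto_zero hpu htende, WSL.limsup_const_mul hp0 hu]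
  · rw [hfun, WSL.liminf_add_tendsto_zero hpu htende, WSL.liminf_const_mul hp0 hu]
end

section
/- Let {α_i}_{i≥1} be a bounded sequence of nonnegative real numbers and let {X_i}_{i≥1} be a {0,1}-valued stochastic process such that for every i ≥ 1 and every x^{i−1} ∈ {0,1}^{i−1} with P(X^{i−1} = x^{i−1}) > 0 one has P(X_i = 1 | X^{i−1} = x^{i−1}) ≤ p. Set ᾱ = limsup_{n→∞} (1/n) Σ_{i=1}^n α_i and α̲ = liminf_{n→∞} (1/n) Σ_{i=1}^n α_i. Then with probability one, limsup_{n→∞} (1/n) Σ_{i=1}^n α_i X_i ≤ p·ᾱ and liminf_{n→∞} (1/n) Σ_{i=1}^n α_i X_i ≤ p·α̲. -/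
open MeasureTheory ProbabilityTheory Filter
open scoped ENNReal

private lemma cyl_meas {Ω : Type*} [MeasurableSpace Ω] (X : ℕ → Ω → Bool)
    (hX : ∀ i, Measurable (X i)) (n : ℕ) (x : Fin n → Bool) :
    MeasurableSet {ω | ∀ j : Fin n, X (j : ℕ) ω = x j} := by
  have : {ω | ∀ j : Fin n, X (j : ℕ) ω = x j} = ⋂ j : Fin n, (X (j : ℕ)) ⁻¹' {x j} := by
    ext ω; simp [Set.mem_iInter]
  rw [this]
  exact MeasurableSet.iInter fun j => (hX j) (measurableSet_singleton _)

private lemma cyl_snoc {Ω : Type*} (X : ℕ → Ω → Bool) (n : ℕ) (x : Fin n → Bool) (b : Bool) :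
    {ω | ∀ j : Fin (n+1), X (j : ℕ) ω = (Fin.snoc x b : Fin (n+1) → Bool) j}
      = {ω | ∀ j : Fin n, X (j : ℕ) ω = x j} ∩ {ω | X n ω = b} := by
  ext ω
  constructor
  · intro h
    refine ⟨fun j => ?_, ?_⟩
    · have := h j.castSucc
      simpa [Fin.snoc_castSucc, Fin.coe_castSucc] using this
    · have := h (Fin.last n)
      simpa [Fin.snoc_last, Fin.val_last] using this
  · rintro ⟨h1, h2⟩ j
    refine Fin.lastCases ?_ ?_ j
    · simpa [Fin.snoc_last, Fin.val_last] using h2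
    · intro i
      simpa [Fin.snoc_castSucc, Fin.coe_castSucc] using h1 i

private lemma cylinder_sum_bound {Ω : Type*} [MeasurableSpace Ω] (μ : Measure Ω)
    [IsProbabilityMeasure μ] (p : ℝ)
    (X : ℕ → Ω → Bool) (hXmeas : ∀ i, Measurable (X i))
    (hcond : ∀ i : ℕ, ∀ x : Fin i → Bool,
      μ {ω | ∀ j : Fin i, X (j : ℕ) ω = x j} ≠ 0 →
      μ ({ω | X i ω = true} ∩ {ω | ∀ j : Fin i, X (j : ℕ) ω = x j})
        ≤ ENNReal.ofReal p * μ {ω | ∀ j : Fin i, X (j : ℕ) ω = x j})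
    (r : ℕ → ℝ≥0∞) (hr : ∀ i, 1 ≤ r i) (n : ℕ) :
    ∑ x : Fin n → Bool,
        (∏ i : Fin n, (if x i then r (i : ℕ) else 1)) * μ {ω | ∀ j : Fin n, X (j : ℕ) ω = x j}
      ≤ ∏ i ∈ Finset.range n, (1 + ENNReal.ofReal p * (r i - 1)) := by
  induction n with
  | zero => simp
  | succ n ih =>
    have key : ∑ x : Fin (n+1) → Bool,
        (∏ i : Fin (n+1), (if x i then r (i : ℕ) else 1))
          * μ {ω | ∀ j : Fin (n+1), X (j : ℕ) ω = x j}
        = ∑ q : Bool × (Fin n → Bool),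
          (∏ i : Fin (n+1), (if (Fin.snoc q.2 q.1 : Fin (n+1) → Bool) i then r (i : ℕ) else 1))
            * μ {ω | ∀ j : Fin (n+1), X (j : ℕ) ω = (Fin.snoc q.2 q.1 : Fin (n+1) → Bool) j} := by
      rw [← Equiv.sum_comp (Fin.snocEquiv (fun _ : Fin (n+1) => Bool))]
      rfl
    rw [key, Fintype.sum_prod_type, Finset.sum_comm]
    have step : ∀ x : Fin n → Bool,
        (∑ b : Bool, (∏ i : Fin (n+1),
            (if (Fin.snoc x b : Fin (n+1) → Bool) i then r (i : ℕ) else 1))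
          * μ {ω | ∀ j : Fin (n+1), X (j : ℕ) ω = (Fin.snoc x b : Fin (n+1) → Bool) j})
        ≤ (1 + ENNReal.ofReal p * (r n - 1)) *
            ((∏ i : Fin n, (if x i then r (i : ℕ) else 1))
              * μ {ω | ∀ j : Fin n, X (j : ℕ) ω = x j}) := by
      intro x
      set C := {ω | ∀ j : Fin n, X (j : ℕ) ω = x j} with hC
      have hprod : ∀ b : Bool, (∏ i : Fin (n+1),
          (if (Fin.snoc x b : Fin (n+1) → Bool) i then r (i : ℕ) else 1))
          = (∏ i : Fin n, (if x i then r (i : ℕ) else 1)) * (if b then r n else 1) := by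
        intro b
        rw [Fin.prod_univ_castSucc]
        simp [Fin.snoc_castSucc, Fin.snoc_last, Fin.coe_castSucc, Fin.val_last]
      have hcylT := cyl_snoc X n x true
      have hcylF := cyl_snoc X n x false
      have hsplit : μ (C ∩ {ω | X n ω = true}) + μ (C ∩ {ω | X n ω = false}) = μ C := by
        have hm : MeasurableSet {ω | X n ω = true} := (hXmeas n) (measurableSet_singleton _)
        have : C \ {ω | X n ω = true} = C ∩ {ω | X n ω = false} := by
          ext ω; simp [Set.mem_diff, Bool.not_eq_true]
        rw [← this]
        exact measure_inter_add_diff C hm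
      have hT : μ (C ∩ {ω | X n ω = true}) ≤ ENNReal.ofReal p * μ C := by
        by_cases h0 : μ C = 0
        · have : μ (C ∩ {ω | X n ω = true}) = 0 :=
            le_antisymm (le_trans (measure_mono Set.inter_subset_left) h0.le) zero_le
          simp [this]
        · have := hcond n x h0
          rwa [Set.inter_comm] at this
      have hinner : r n * μ (C ∩ {ω | X n ω = true}) + μ (C ∩ {ω | X n ω = false})
          ≤ (1 + ENNReal.ofReal p * (r n - 1)) * μ C := by
        have h1 : r n = 1 + (r n - 1) := (add_tsub_cancel_of_le (hr n)).symm
        calc r n * μ (C ∩ {ω | X n ω = true}) + μ (C ∩ {ω | X n ω = false})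
            = (μ (C ∩ {ω | X n ω = true}) + μ (C ∩ {ω | X n ω = false}))
                + (r n - 1) * μ (C ∩ {ω | X n ω = true}) := by
                nth_rewrite 1 [h1]; ring
          _ = μ C + (r n - 1) * μ (C ∩ {ω | X n ω = true}) := by rw [hsplit]
          _ ≤ μ C + (r n - 1) * (ENNReal.ofReal p * μ C) :=
              add_le_add le_rfl (mul_le_mul_right hT _)
          _ = (1 + ENNReal.ofReal p * (r n - 1)) * μ C := by ring
      calc (∑ b : Bool, (∏ i : Fin (n+1),
              (if (Fin.snoc x b : Fin (n+1) → Bool) i then r (i : ℕ) else 1))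
            * μ {ω | ∀ j : Fin (n+1), X (j : ℕ) ω = (Fin.snoc x b : Fin (n+1) → Bool) j})
          = (∏ i : Fin n, (if x i then r (i : ℕ) else 1)) *
              (r n * μ (C ∩ {ω | X n ω = true}) + μ (C ∩ {ω | X n ω = false})) := by
            rw [Fintype.sum_bool, hprod true, hprod false, hcylT, hcylF]
            simp only [if_true, Bool.false_eq_true, if_false, mul_one]
            ring
        _ ≤ (∏ i : Fin n, (if x i then r (i : ℕ) else 1)) *
              ((1 + ENNReal.ofReal p * (r n - 1)) * μ C) := mul_le_mul_right hinner _
        _ = (1 + ENNReal.ofReal p * (r n - 1)) *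
              ((∏ i : Fin n, (if x i then r (i : ℕ) else 1)) * μ C) := by ring
    calc ∑ x : Fin n → Bool, ∑ b : Bool, (∏ i : Fin (n+1),
            (if (Fin.snoc x b : Fin (n+1) → Bool) i then r (i : ℕ) else 1))
          * μ {ω | ∀ j : Fin (n+1), X (j : ℕ) ω = (Fin.snoc x b : Fin (n+1) → Bool) j}
        ≤ ∑ x : Fin n → Bool, (1 + ENNReal.ofReal p * (r n - 1)) *
            ((∏ i : Fin n, (if x i then r (i : ℕ) else 1))
              * μ {ω | ∀ j : Fin n, X (j : ℕ) ω = x j}) := Finset.sum_le_sum fun x _ => step x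
      _ = (1 + ENNReal.ofReal p * (r n - 1)) * ∑ x : Fin n → Bool,
            (∏ i : Fin n, (if x i then r (i : ℕ) else 1))
              * μ {ω | ∀ j : Fin n, X (j : ℕ) ω = x j} := by rw [Finset.mul_sum]
      _ ≤ (1 + ENNReal.ofReal p * (r n - 1)) * ∏ i ∈ Finset.range n,
            (1 + ENNReal.ofReal p * (r i - 1)) := mul_le_mul_right ih _
      _ = ∏ i ∈ Finset.range (n+1), (1 + ENNReal.ofReal p * (r i - 1)) := by
          rw [Finset.prod_range_succ]; ring

private lemma chernoff_measure_bound {Ω : Type*} [MeasurableSpace Ω] (μ : Measure Ω)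
    [IsProbabilityMeasure μ] (p : ℝ) (hp0 : 0 ≤ p) (hp1 : p ≤ 1)
    (X : ℕ → Ω → Bool) (hXmeas : ∀ i, Measurable (X i))
    (hcond : ∀ i : ℕ, ∀ x : Fin i → Bool,
      μ {ω | ∀ j : Fin i, X (j : ℕ) ω = x j} ≠ 0 →
      μ ({ω | X i ω = true} ∩ {ω | ∀ j : Fin i, X (j : ℕ) ω = x j})
        ≤ ENNReal.ofReal p * μ {ω | ∀ j : Fin i, X (j : ℕ) ω = x j})
    (α : ℕ → ℝ) (hαnn : ∀ i, 0 ≤ α i) (A : ℝ) (hA1 : 1 ≤ A) (hαA : ∀ i, α i ≤ A)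
    (ε t : ℝ) (hε : 0 < ε) (ht0 : 0 < t) (htA : t * A ≤ 1) (htq : t ^ 2 * A ^ 2 ≤ t * ε / 2)
    (n : ℕ) :
    μ {ω | p * (∑ i ∈ Finset.range n, α i) + n * ε
        ≤ ∑ i ∈ Finset.range n, α i * (if X i ω = true then (1 : ℝ) else 0)}
      ≤ ENNReal.ofReal (Real.exp (-(t * ε / 2 * n))) := by
  have hA0 : (0 : ℝ) < A := lt_of_lt_of_le one_pos hA1
  have htαi : ∀ i, 0 ≤ t * α i ∧ t * α i ≤ 1 := fun i =>
    ⟨mul_nonneg ht0.le (hαnn i), le_trans (by nlinarith [hαA i, hαnn i]) htA⟩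
  set σ := ∑ i ∈ Finset.range n, α i with hσ
  set a := p * σ + n * ε with ha
  set r : ℕ → ℝ≥0∞ := fun i => ENNReal.ofReal (Real.exp (t * α i)) with hrdef
  have hr : ∀ i, 1 ≤ r i := fun i =>
    ENNReal.one_le_ofReal.mpr (Real.one_le_exp (htαi i).1)
  set sval : (Fin n → Bool) → ℝ :=
    fun x => ∑ i : Fin n, α (i : ℕ) * (if x i then (1 : ℝ) else 0) with hsval
  set B : Finset (Fin n → Bool) := Finset.univ.filter (fun x => a ≤ sval x) with hB
  -- step 1 : inclusion into union of cylinders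
  have hsub : {ω | a ≤ ∑ i ∈ Finset.range n, α i * (if X i ω = true then (1 : ℝ) else 0)}
      ⊆ ⋃ x ∈ B, {ω | ∀ j : Fin n, X (j : ℕ) ω = x j} := by
    intro ω hω
    have hx : (fun j : Fin n => X (j : ℕ) ω) ∈ B := by
      rw [hB, Finset.mem_filter]
      refine ⟨Finset.mem_univ _, ?_⟩
      have : sval (fun j : Fin n => X (j : ℕ) ω)
          = ∑ i ∈ Finset.range n, α i * (if X i ω = true then (1 : ℝ) else 0) :=
        Fin.sum_univ_eq_sum_range (fun k => α k * (if X k ω = true then (1 : ℝ) else 0)) n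
      rw [this]
      exact hω
    exact Set.mem_biUnion hx (fun j => rfl)
  -- step 2 : weight each cylinder
  have hw : ∀ x : Fin n → Bool,
      ENNReal.ofReal (Real.exp (t * sval x))
        = ∏ i : Fin n, (if x i then r (i : ℕ) else 1) := by
    intro x
    have h1 : t * sval x = ∑ i : Fin n, t * (α (i : ℕ) * (if x i then (1 : ℝ) else 0)) := by
      rw [hsval, Finset.mul_sum]
    rw [h1, Real.exp_sum]
    rw [ENNReal.ofReal_prod_of_nonneg (fun i _ => (Real.exp_pos _).le)]
    refine Finset.prod_congr rfl fun i _ => ?_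
    by_cases hb : x i
    · simp [hb, hrdef]
    · simp [hb, hrdef]
  have hmarkov : ∀ x ∈ B, μ {ω | ∀ j : Fin n, X (j : ℕ) ω = x j}
      ≤ ENNReal.ofReal (Real.exp (-(t * a))) *
          ((∏ i : Fin n, (if x i then r (i : ℕ) else 1))
            * μ {ω | ∀ j : Fin n, X (j : ℕ) ω = x j}) := by
    intro x hx
    have hax : a ≤ sval x := (Finset.mem_filter.mp hx).2
    have h1 : (1 : ℝ≥0∞) ≤ ENNReal.ofReal (Real.exp (-(t * a))) *
        (∏ i : Fin n, (if x i then r (i : ℕ) else 1)) := by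
      rw [← hw, ← ENNReal.ofReal_mul (Real.exp_pos _).le, ← Real.exp_add]
      refine ENNReal.one_le_ofReal.mpr (Real.one_le_exp ?_)
      nlinarith
    calc μ {ω | ∀ j : Fin n, X (j : ℕ) ω = x j}
        = 1 * μ {ω | ∀ j : Fin n, X (j : ℕ) ω = x j} := (one_mul _).symm
      _ ≤ (ENNReal.ofReal (Real.exp (-(t * a))) *
            (∏ i : Fin n, (if x i then r (i : ℕ) else 1)))
            * μ {ω | ∀ j : Fin n, X (j : ℕ) ω = x j} := mul_le_mul_left h1 _
      _ = _ := by ring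
  -- combine
  have hstep : μ {ω | a ≤ ∑ i ∈ Finset.range n, α i * (if X i ω = true then (1 : ℝ) else 0)}
      ≤ ENNReal.ofReal (Real.exp (-(t * a))) *
          ∏ i ∈ Finset.range n, (1 + ENNReal.ofReal p * (r i - 1)) := by
    calc μ {ω | a ≤ ∑ i ∈ Finset.range n, α i * (if X i ω = true then (1 : ℝ) else 0)}
        ≤ μ (⋃ x ∈ B, {ω | ∀ j : Fin n, X (j : ℕ) ω = x j}) := measure_mono hsub
      _ ≤ ∑ x ∈ B, μ {ω | ∀ j : Fin n, X (j : ℕ) ω = x j} := measure_biUnion_finset_le _ _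
      _ ≤ ∑ x ∈ B, ENNReal.ofReal (Real.exp (-(t * a))) *
            ((∏ i : Fin n, (if x i then r (i : ℕ) else 1))
              * μ {ω | ∀ j : Fin n, X (j : ℕ) ω = x j}) := Finset.sum_le_sum hmarkov
      _ = ENNReal.ofReal (Real.exp (-(t * a))) * ∑ x ∈ B,
            (∏ i : Fin n, (if x i then r (i : ℕ) else 1))
              * μ {ω | ∀ j : Fin n, X (j : ℕ) ω = x j} := by rw [Finset.mul_sum]
      _ ≤ ENNReal.ofReal (Real.exp (-(t * a))) * ∑ x : Fin n → Bool,
            (∏ i : Fin n, (if x i then r (i : ℕ) else 1))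
              * μ {ω | ∀ j : Fin n, X (j : ℕ) ω = x j} :=
          mul_le_mul_right (Finset.sum_le_sum_of_subset (Finset.subset_univ _)) _
      _ ≤ _ := mul_le_mul_right
            (cylinder_sum_bound μ p X hXmeas hcond r hr n) _
  -- step 3 : convert product to real
  have hprodreal : ∏ i ∈ Finset.range n, (1 + ENNReal.ofReal p * (r i - 1))
      = ENNReal.ofReal (∏ i ∈ Finset.range n, (1 + p * (Real.exp (t * α i) - 1))) := by
    rw [ENNReal.ofReal_prod_of_nonneg]
    · refine Finset.prod_congr rfl fun i _ => ?_
      have he1 : (1 : ℝ) ≤ Real.exp (t * α i) := Real.one_le_exp (htαi i).1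
      rw [hrdef]
      rw [show (1 : ℝ≥0∞) = ENNReal.ofReal 1 from ENNReal.ofReal_one.symm]
      rw [← ENNReal.ofReal_sub _ zero_le_one, ← ENNReal.ofReal_mul hp0,
        ← ENNReal.ofReal_add zero_le_one (by nlinarith)]
    · intro i _
      have he1 : (1 : ℝ) ≤ Real.exp (t * α i) := Real.one_le_exp (htαi i).1
      nlinarith
  -- step 4 : real estimate
  have hreal : Real.exp (-(t * a)) * ∏ i ∈ Finset.range n, (1 + p * (Real.exp (t * α i) - 1))
      ≤ Real.exp (-(t * ε / 2 * n)) := by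
    have hpe : ∏ i ∈ Finset.range n, (1 + p * (Real.exp (t * α i) - 1))
        ≤ Real.exp (∑ i ∈ Finset.range n, p * (Real.exp (t * α i) - 1)) := by
      rw [Real.exp_sum]
      refine Finset.prod_le_prod (fun i _ => ?_) (fun i _ => ?_)
      · have he1 : (1 : ℝ) ≤ Real.exp (t * α i) := Real.one_le_exp (htαi i).1
        nlinarith
      · have := Real.add_one_le_exp (p * (Real.exp (t * α i) - 1))
        linarith
    have hquad : ∀ i ∈ Finset.range n,
        p * (Real.exp (t * α i) - 1) - t * (p * α i) ≤ t ^ 2 * A ^ 2 := by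
      intro i _
      have h01 := (htαi i).1
      have h11 := (htαi i).2
      have hq := Real.abs_exp_sub_one_sub_id_le (x := t * α i) (by rw [abs_of_nonneg h01]; exact h11)
      have hq' : Real.exp (t * α i) - 1 - t * α i ≤ (t * α i) ^ 2 :=
        le_trans (le_abs_self _) hq
      have hαsq : α i ^ 2 ≤ A ^ 2 := by nlinarith [hαA i, hαnn i]
      have hAq : (t * α i) ^ 2 ≤ t ^ 2 * A ^ 2 := by nlinarith [sq_nonneg t]
      nlinarith
    have hsumq : ∑ i ∈ Finset.range n, p * (Real.exp (t * α i) - 1)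
        ≤ t * (p * σ) + n * (t ^ 2 * A ^ 2) := by
      have h1 : ∑ i ∈ Finset.range n, (p * (Real.exp (t * α i) - 1) - t * (p * α i))
          ≤ ∑ i ∈ Finset.range n, t ^ 2 * A ^ 2 := Finset.sum_le_sum hquad
      rw [Finset.sum_sub_distrib, Finset.sum_const, Finset.card_range, nsmul_eq_mul] at h1
      have h2 : t * (p * σ) = ∑ i ∈ Finset.range n, t * (p * α i) := by
        rw [hσ]; simp only [Finset.mul_sum]
      linarith
    calc Real.exp (-(t * a)) * ∏ i ∈ Finset.range n, (1 + p * (Real.exp (t * α i) - 1))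
        ≤ Real.exp (-(t * a)) *
            Real.exp (∑ i ∈ Finset.range n, p * (Real.exp (t * α i) - 1)) :=
          mul_le_mul_of_nonneg_left hpe (Real.exp_pos _).le
      _ = Real.exp (-(t * a) + ∑ i ∈ Finset.range n, p * (Real.exp (t * α i) - 1)) :=
          (Real.exp_add _ _).symm
      _ ≤ Real.exp (-(t * ε / 2 * n)) := by
          refine Real.exp_le_exp.mpr ?_
          have hn0 : (0 : ℝ) ≤ (n : ℝ) := Nat.cast_nonneg n
          have h3 : (n : ℝ) * (t ^ 2 * A ^ 2) ≤ (n : ℝ) * (t * ε / 2) :=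
            mul_le_mul_of_nonneg_left htq hn0
          rw [ha]
          nlinarith [hsumq]
  refine le_trans hstep ?_
  rw [hprodreal, ← ENNReal.ofReal_mul (Real.exp_pos _).le]
  exact ENNReal.ofReal_le_ofReal hreal

private lemma chernoff_ae {Ω : Type*} [MeasurableSpace Ω] (μ : Measure Ω)
    [IsProbabilityMeasure μ] (p : ℝ) (hp0 : 0 ≤ p) (hp1 : p ≤ 1)
    (X : ℕ → Ω → Bool) (hXmeas : ∀ i, Measurable (X i))
    (hcond : ∀ i : ℕ, ∀ x : Fin i → Bool,
      μ {ω | ∀ j : Fin i, X (j : ℕ) ω = x j} ≠ 0 →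
      μ ({ω | X i ω = true} ∩ {ω | ∀ j : Fin i, X (j : ℕ) ω = x j})
        ≤ ENNReal.ofReal p * μ {ω | ∀ j : Fin i, X (j : ℕ) ω = x j})
    (α : ℕ → ℝ) (hαnn : ∀ i, 0 ≤ α i) (A : ℝ) (hA1 : 1 ≤ A) (hαA : ∀ i, α i ≤ A)
    (ε : ℝ) (hε : 0 < ε) :
    ∀ᵐ ω ∂μ, ∀ᶠ n in atTop,
      (∑ i ∈ Finset.range n, α i * (if X i ω = true then (1 : ℝ) else 0))
        < p * (∑ i ∈ Finset.range n, α i) + n * ε := by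
  have hA0 : (0 : ℝ) < A := lt_of_lt_of_le one_pos hA1
  set t := min (ε / (2 * A ^ 2)) (1 / A) with htdef
  have ht0 : 0 < t := lt_min (by positivity) (by positivity)
  have htA : t * A ≤ 1 := by
    have : t ≤ 1 / A := min_le_right _ _
    calc t * A ≤ (1 / A) * A := mul_le_mul_of_nonneg_right this hA0.le
      _ = 1 := by field_simp
  have htq : t ^ 2 * A ^ 2 ≤ t * ε / 2 := by
    have h1 : t ≤ ε / (2 * A ^ 2) := min_le_left _ _
    have h2 : t * A ^ 2 ≤ ε / 2 := by
      calc t * A ^ 2 ≤ (ε / (2 * A ^ 2)) * A ^ 2 :=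
          mul_le_mul_of_nonneg_right h1 (by positivity)
        _ = ε / 2 := by field_simp
    calc t ^ 2 * A ^ 2 = t * (t * A ^ 2) := by ring
      _ ≤ t * (ε / 2) := mul_le_mul_of_nonneg_left h2 ht0.le
      _ = t * ε / 2 := by ring
  set c := t * ε / 2 with hcdef
  have hc0 : 0 < c := by positivity
  set s : ℕ → Set Ω := fun n => {ω | p * (∑ i ∈ Finset.range n, α i) + n * ε
      ≤ ∑ i ∈ Finset.range n, α i * (if X i ω = true then (1 : ℝ) else 0)} with hsdef
  have hbound : ∀ n, μ (s n) ≤ ENNReal.ofReal (Real.exp (-(c * n))) := fun n =>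
    chernoff_measure_bound μ p hp0 hp1 X hXmeas hcond α hαnn A hA1 hαA ε t hε ht0 htA htq n
  have hsum : (∑' n, μ (s n)) ≠ ∞ := by
    refine ne_top_of_le_ne_top ?_ (ENNReal.tsum_le_tsum hbound)
    have hrr : ∀ n : ℕ, ENNReal.ofReal (Real.exp (-(c * n)))
        = (ENNReal.ofReal (Real.exp (-c))) ^ n := by
      intro n
      rw [← ENNReal.ofReal_pow (Real.exp_pos _).le, ← Real.exp_nat_mul]
      congr 1
      ring
    simp_rw [hrr]
    rw [ENNReal.tsum_geometric]
    have hlt : ENNReal.ofReal (Real.exp (-c)) < 1 := by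
      rw [← ENNReal.ofReal_one]
      exact (ENNReal.ofReal_lt_ofReal_iff one_pos).mpr
        (Real.exp_lt_one_iff.mpr (by linarith))
    exact ENNReal.inv_ne_top.mpr (tsub_pos_of_lt hlt).ne'
  filter_upwards [MeasureTheory.ae_eventually_notMem hsum] with ω hω
  filter_upwards [hω] with n hn
  exact lt_of_not_ge hn

private lemma final_calc (p A : ℝ) (hp0 : 0 ≤ p) (hp1 : p ≤ 1)
    (u a : ℕ → ℝ) (hu0 : ∀ n, 0 ≤ u n) (ha0 : ∀ n, 0 ≤ a n) (haA : ∀ n, a n ≤ A)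
    (h : ∀ ε : ℝ, 0 < ε → ∀ᶠ n in atTop, u n ≤ p * a n + ε) :
    limsup u atTop ≤ p * limsup a atTop ∧ liminf u atTop ≤ p * liminf a atTop := by
  have hubd : IsBoundedUnder (· ≤ ·) atTop a := isBoundedUnder_of ⟨A, haA⟩
  have hacb : IsCoboundedUnder (· ≥ ·) atTop a := hubd.isCoboundedUnder_ge
  have hucb : IsCoboundedUnder (· ≤ ·) atTop u :=
    isCoboundedUnder_le_of_eventually_le atTop (x := 0) (Filter.Eventually.of_forall hu0)
  have hulbd : IsBoundedUnder (· ≥ ·) atTop u := isBoundedUnder_of ⟨0, hu0⟩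
  constructor
  · refine le_of_forall_pos_le_add fun δ hδ => ?_
    have h1 : ∀ᶠ n in atTop, a n < limsup a atTop + δ / 2 :=
      eventually_lt_of_limsup_lt (lt_add_of_pos_right _ (by linarith)) hubd
    have h2 := h (δ / 2) (by linarith)
    refine limsup_le_of_le hucb ?_
    filter_upwards [h1, h2] with n hn1 hn2
    have : p * a n ≤ p * (limsup a atTop + δ / 2) :=
      mul_le_mul_of_nonneg_left hn1.le hp0
    nlinarith
  · refine le_of_forall_pos_le_add fun δ hδ => ?_
    have h1 : ∃ᶠ n in atTop, a n < liminf a atTop + δ / 2 :=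
      frequently_lt_of_liminf_lt hacb (lt_add_of_pos_right _ (by linarith))
    have h2 := h (δ / 2) (by linarith)
    have h3 : ∃ᶠ n in atTop, u n ≤ p * liminf a atTop + δ := by
      refine (h1.and_eventually h2).mono ?_
      rintro n ⟨hn1, hn2⟩
      have : p * a n ≤ p * (liminf a atTop + δ / 2) :=
        mul_le_mul_of_nonneg_left hn1.le hp0
      nlinarith
    exact liminf_le_of_frequently_le h3 hulbd

/-- Upper-bound half of the paper's Lemma 9: if `X` is a binary process whose conditional
probability of a one given any past (of positive probability) is at most `p`, and `α` is a
bounded sequence of nonnegative reals, then almost surely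
`limsup (1/n) ∑_{i<n} α i X i ≤ p * limsup (1/n) ∑_{i<n} α i` and
`liminf (1/n) ∑_{i<n} α i X i ≤ p * liminf (1/n) ∑_{i<n} α i`. -/
theorem limit_bounds_upper
    {Ω : Type*} [MeasurableSpace Ω] (μ : Measure Ω) [IsProbabilityMeasure μ]
    (p : ℝ) (hp0 : 0 ≤ p) (hp1 : p ≤ 1)
    (X : ℕ → Ω → Bool) (hXmeas : ∀ i, Measurable (X i))
    (hcond : ∀ i : ℕ, ∀ x : Fin i → Bool,
      μ {ω | ∀ j : Fin i, X (j : ℕ) ω = x j} ≠ 0 →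
      μ ({ω | X i ω = true} ∩ {ω | ∀ j : Fin i, X (j : ℕ) ω = x j})
        ≤ ENNReal.ofReal p * μ {ω | ∀ j : Fin i, X (j : ℕ) ω = x j})
    (α : ℕ → ℝ) (hαnn : ∀ i, 0 ≤ α i) (hαbd : ∃ A, ∀ i, α i ≤ A) :
    ∀ᵐ ω ∂μ,
      (Filter.limsup
          (fun n : ℕ => (1 / (n : ℝ)) * ∑ i ∈ Finset.range n,
            α i * (if X i ω = true then (1 : ℝ) else 0)) atTop
        ≤ p * Filter.limsup
            (fun n : ℕ => (1 / (n : ℝ)) * ∑ i ∈ Finset.range n, α i) atTop)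
      ∧ (Filter.liminf
          (fun n : ℕ => (1 / (n : ℝ)) * ∑ i ∈ Finset.range n,
            α i * (if X i ω = true then (1 : ℝ) else 0)) atTop
        ≤ p * Filter.liminf
            (fun n : ℕ => (1 / (n : ℝ)) * ∑ i ∈ Finset.range n, α i) atTop) := by
  obtain ⟨A₀, hA₀⟩ := hαbd
  set A := max A₀ 1 with hAdef
  have hA1 : (1 : ℝ) ≤ A := le_max_right _ _
  have hαA : ∀ i, α i ≤ A := fun i => le_trans (hA₀ i) (le_max_left _ _)
  have hae : ∀ᵐ ω ∂μ, ∀ k : ℕ, ∀ᶠ n in atTop,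
      (∑ i ∈ Finset.range n, α i * (if X i ω = true then (1 : ℝ) else 0))
        < p * (∑ i ∈ Finset.range n, α i) + n * (1 / ((k : ℝ) + 1)) := by
    rw [ae_all_iff]
    intro k
    exact chernoff_ae μ p hp0 hp1 X hXmeas hcond α hαnn A hA1 hαA
      (1 / ((k : ℝ) + 1)) (by positivity)
  filter_upwards [hae] with ω hω
  have ha0 : ∀ n : ℕ, 0 ≤ (1 / (n : ℝ)) * ∑ i ∈ Finset.range n, α i :=
    fun n => mul_nonneg (by positivity) (Finset.sum_nonneg fun i _ => hαnn i)
  have hu0 : ∀ n : ℕ, 0 ≤ (1 / (n : ℝ)) * ∑ i ∈ Finset.range n,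
      α i * (if X i ω = true then (1 : ℝ) else 0) :=
    fun n => mul_nonneg (by positivity) (Finset.sum_nonneg fun i _ =>
      mul_nonneg (hαnn i) (by by_cases h : X i ω = true <;> simp [h]))
  have haA : ∀ n : ℕ, (1 / (n : ℝ)) * ∑ i ∈ Finset.range n, α i ≤ A := by
    intro n
    rcases Nat.eq_zero_or_pos n with h0 | h0
    · subst h0; simpa using le_trans zero_le_one hA1
    · have hn : (0 : ℝ) < n := by exact_mod_cast h0
      have hs : ∑ i ∈ Finset.range n, α i ≤ n * A := by
        calc ∑ i ∈ Finset.range n, α i ≤ ∑ i ∈ Finset.range n, A :=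
            Finset.sum_le_sum fun i _ => hαA i
          _ = n * A := by rw [Finset.sum_const, Finset.card_range, nsmul_eq_mul]
      calc (1 / (n : ℝ)) * ∑ i ∈ Finset.range n, α i
          ≤ (1 / (n : ℝ)) * ((n : ℝ) * A) :=
            mul_le_mul_of_nonneg_left hs (by positivity)
        _ = A := by field_simp
  have h : ∀ ε : ℝ, 0 < ε → ∀ᶠ n : ℕ in atTop,
      (1 / (n : ℝ)) * ∑ i ∈ Finset.range n, α i * (if X i ω = true then (1 : ℝ) else 0)
        ≤ p * ((1 / (n : ℝ)) * ∑ i ∈ Finset.range n, α i) + ε := by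
    intro ε hε
    obtain ⟨k, hk⟩ := exists_nat_one_div_lt hε
    filter_upwards [hω k, eventually_ge_atTop 1] with n hn hn1
    have hn0 : (0 : ℝ) < n := by exact_mod_cast hn1
    calc (1 / (n : ℝ)) * ∑ i ∈ Finset.range n, α i * (if X i ω = true then (1 : ℝ) else 0)
        ≤ (1 / (n : ℝ)) * (p * (∑ i ∈ Finset.range n, α i) + n * (1 / ((k : ℝ) + 1))) :=
          mul_le_mul_of_nonneg_left hn.le (by positivity)
      _ = p * ((1 / (n : ℝ)) * ∑ i ∈ Finset.range n, α i) + 1 / ((k : ℝ) + 1) := by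
          field_simp
      _ ≤ p * ((1 / (n : ℝ)) * ∑ i ∈ Finset.range n, α i) + ε := by
          have := hk.le
          push_cast at this ⊢
          linarith
  exact final_calc p A hp0 hp1 _ _ hu0 ha0 haA h
end

section
/- Let {α_i}_{i≥1} be a bounded sequence of nonnegative real numbers and let {X_i}_{i≥1} be a {0,1}-valued stochastic process such that for every i ≥ 1 and every x^{i−1} ∈ {0,1}^{i−1} with P(X^{i−1} = x^{i−1}) > 0 one has P(X_i = 1 | X^{i−1} = x^{i−1}) ≥ p. Set ᾱ = limsup_{n→∞} (1/n) Σ_{i=1}^n α_i and α̲ = liminf_{n→∞} (1/n) Σ_{i=1}^n α_i. Then with probability one, limsup_{n→∞} (1/n) Σ_{i=1}^n α_i X_i ≥ p·ᾱ and liminf_{n→∞} (1/n) Σ_{i=1}^n α_i X_i ≥ p·α̲. -/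
open MeasureTheory ProbabilityTheory Filter
open scoped ENNReal

lemma lb_exp_neg_le_quad {x : ℝ} (hx : 0 ≤ x) : Real.exp (-x) ≤ 1 - x + x^2 := by
  have hpos : (0:ℝ) < 1 + x := by linarith
  have hexp : 1 + x ≤ Real.exp x := by
    have := Real.add_one_le_exp x; linarith
  have h1 : Real.exp (-x) ≤ 1 / (1 + x) := by
    rw [Real.exp_neg, one_div]
    exact inv_anti₀ hpos hexp
  have h2 : 1 / (1 + x) ≤ 1 - x + x^2 := by
    rw [div_le_iff₀ hpos]
    nlinarith [pow_nonneg hx 3]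
  linarith

lemma lb_two_point_bound {p a A t m m1 m0 : ℝ} (hp0 : 0 ≤ p) (hp1 : p ≤ 1)
    (ha : 0 ≤ a) (haA : a ≤ A) (ht : 0 ≤ t)
    (hm1 : 0 ≤ m1) (hm0 : 0 ≤ m0) (hsum : m1 + m0 = m) (hpm : p * m ≤ m1) :
    m1 * Real.exp (t * a * (p - 1)) + m0 * Real.exp (t * a * p)
      ≤ m * Real.exp (t^2 * A^2) := by
  have hm : 0 ≤ m := by linarith
  have hta : 0 ≤ t * a := mul_nonneg ht ha
  have hE : Real.exp (t * a * (p - 1)) ≤ Real.exp (t * a * p) :=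
    Real.exp_le_exp.mpr (by nlinarith)
  have key : m1 * Real.exp (t * a * (p - 1)) + m0 * Real.exp (t * a * p)
      ≤ m * ((1 - p) * Real.exp (t * a * p) + p * Real.exp (t * a * (p - 1))) := by
    have keyeq : m1 * Real.exp (t * a * (p - 1)) + m0 * Real.exp (t * a * p)
        = m * Real.exp (t * a * p)
          - m1 * (Real.exp (t * a * p) - Real.exp (t * a * (p - 1))) := by
      rw [← hsum]; ring
    have hprod : p * m * (Real.exp (t * a * p) - Real.exp (t * a * (p - 1)))
        ≤ m1 * (Real.exp (t * a * p) - Real.exp (t * a * (p - 1))) :=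
      mul_le_mul_of_nonneg_right hpm (sub_nonneg.mpr hE)
    have rhseq : m * ((1 - p) * Real.exp (t * a * p) + p * Real.exp (t * a * (p - 1)))
        = m * Real.exp (t * a * p)
          - p * m * (Real.exp (t * a * p) - Real.exp (t * a * (p - 1))) := by ring
    linarith
  have h2 : (1 - p) * Real.exp (t * a * p) + p * Real.exp (t * a * (p - 1))
      ≤ Real.exp (t * a * p) * (1 - p * (t*a) + p * (t*a)^2) := by
    have : Real.exp (t * a * (p - 1)) = Real.exp (t * a * p) * Real.exp (-(t*a)) := by
      rw [← Real.exp_add]; ring_nf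
    rw [this]
    have hq := lb_exp_neg_le_quad hta
    have hepos := Real.exp_pos (t * a * p)
    nlinarith [mul_nonneg (mul_nonneg hepos.le hp0) (sub_nonneg.mpr hq)]
  have h3 : (1 - p * (t*a) + p * (t*a)^2) ≤ Real.exp (- (p * (t*a)) + p * (t*a)^2) := by
    have := Real.add_one_le_exp (- (p * (t*a)) + p * (t*a)^2)
    linarith
  have h4 : Real.exp (t * a * p) * Real.exp (- (p * (t*a)) + p * (t*a)^2)
      = Real.exp (p * (t*a)^2) := by
    rw [← Real.exp_add]; ring_nf
  have h5 : Real.exp (p * (t*a)^2) ≤ Real.exp (t^2 * A^2) := by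
    apply Real.exp_le_exp.mpr
    have h6 : (t*a)^2 ≤ t^2 * A^2 := by
      have ha2 : a^2 ≤ A^2 := by nlinarith
      have := sq_nonneg t
      calc (t*a)^2 = t^2 * a^2 := by ring
        _ ≤ t^2 * A^2 := by nlinarith
    nlinarith [sq_nonneg (t*a)]
  have hepos := (Real.exp_pos (t * a * p)).le
  calc m1 * Real.exp (t * a * (p - 1)) + m0 * Real.exp (t * a * p)
      ≤ m * ((1 - p) * Real.exp (t * a * p) + p * Real.exp (t * a * (p - 1))) := key
    _ ≤ m * (Real.exp (t * a * p) * (1 - p * (t*a) + p * (t*a)^2)) := by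
        exact mul_le_mul_of_nonneg_left h2 hm
    _ ≤ m * (Real.exp (t * a * p) * Real.exp (- (p * (t*a)) + p * (t*a)^2)) := by
        apply mul_le_mul_of_nonneg_left _ hm
        exact mul_le_mul_of_nonneg_left h3 hepos
    _ = m * Real.exp (p * (t*a)^2) := by rw [h4]
    _ ≤ m * Real.exp (t^2 * A^2) := mul_le_mul_of_nonneg_left h5 hm

section LBAux
variable {Ω : Type*} [MeasurableSpace Ω]

def lbCyl (X : ℕ → Ω → Bool) (n : ℕ) (x : Fin n → Bool) : Set Ω :=
  {ω | ∀ j : Fin n, X (j : ℕ) ω = x j}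

noncomputable def lbW (p t : ℝ) (α : ℕ → ℝ) {n : ℕ} (x : Fin n → Bool) : ℝ :=
  ∏ j : Fin n, Real.exp (t * α (j : ℕ) * (p - (if x j then (1:ℝ) else 0)))

noncomputable def lbT (μ : Measure Ω) (X : ℕ → Ω → Bool) (p t : ℝ) (α : ℕ → ℝ) (n : ℕ) : ℝ :=
  ∑ x : Fin n → Bool, lbW p t α x * (μ (lbCyl X n x)).toReal

lemma lbW_pos (p t : ℝ) (α : ℕ → ℝ) {n : ℕ} (x : Fin n → Bool) : 0 < lbW p t α x :=
  Finset.prod_pos fun _ _ => Real.exp_pos _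

lemma lbCyl_snoc (X : ℕ → Ω → Bool) (n : ℕ) (x : Fin n → Bool) (c : Bool) :
    lbCyl X (n + 1) (Fin.snoc x c) = lbCyl X n x ∩ {ω | X n ω = c} := by
  ext ω
  simp only [lbCyl, Set.mem_setOf_eq, Set.mem_inter_iff]
  constructor
  · intro h
    refine ⟨fun j => ?_, ?_⟩
    · simpa [Fin.snoc_castSucc] using h j.castSucc
    · simpa [Fin.snoc_last] using h (Fin.last n)
  · rintro ⟨h1, h2⟩ j
    refine Fin.lastCases ?_ (fun i => ?_) j
    · simpa [Fin.snoc_last] using h2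
    · simpa [Fin.snoc_castSucc] using h1 i

lemma lbW_snoc (p t : ℝ) (α : ℕ → ℝ) {n : ℕ} (x : Fin n → Bool) (c : Bool) :
    lbW p t α (Fin.snoc x c)
      = lbW p t α x * Real.exp (t * α n * (p - (if c then (1:ℝ) else 0))) := by
  rw [lbW, Fin.prod_univ_castSucc]
  simp [lbW, Fin.snoc_castSucc, Fin.snoc_last]

lemma lbT_succ (μ : Measure Ω) (X : ℕ → Ω → Bool) (p t : ℝ) (α : ℕ → ℝ) (n : ℕ) :
    lbT μ X p t α (n + 1)
      = ∑ x : Fin n → Bool, ∑ c : Bool,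
          lbW p t α (Fin.snoc x c) * (μ (lbCyl X (n+1) (Fin.snoc x c))).toReal := by
  rw [lbT, ← Equiv.sum_comp (Fin.snocEquiv (fun _ => Bool))
      (fun y : Fin (n+1) → Bool => lbW p t α y * (μ (lbCyl X (n+1) y)).toReal)]
  rw [Fintype.sum_prod_type, Finset.sum_comm]
  rfl

lemma lbT_le (μ : Measure Ω) [IsProbabilityMeasure μ]
    (p : ℝ) (hp0 : 0 ≤ p) (hp1 : p ≤ 1)
    (X : ℕ → Ω → Bool) (hXmeas : ∀ i, Measurable (X i))
    (hcond : ∀ i : ℕ, ∀ x : Fin i → Bool,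
      μ {ω | ∀ j : Fin i, X (j : ℕ) ω = x j} ≠ 0 →
      μ ({ω | X i ω = true} ∩ {ω | ∀ j : Fin i, X (j : ℕ) ω = x j})
        ≥ ENNReal.ofReal p * μ {ω | ∀ j : Fin i, X (j : ℕ) ω = x j})
    (α : ℕ → ℝ) (hαnn : ∀ i, 0 ≤ α i) (A : ℝ) (hαA : ∀ i, α i ≤ A)
    (t : ℝ) (ht : 0 ≤ t) :
    ∀ n, lbT μ X p t α n ≤ Real.exp (n * (t^2 * A^2)) := by
  intro n
  induction n with
  | zero =>
      have hu : (Finset.univ : Finset (Fin 0 → Bool)) = {fun j => j.elim0} := by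
        apply Finset.eq_singleton_iff_unique_mem.mpr
        exact ⟨Finset.mem_univ _, fun y _ => funext fun j => j.elim0⟩
      simp only [lbT, hu, Finset.sum_singleton]
      have hcyl : lbCyl X 0 (fun j => j.elim0) = Set.univ := by
        ext ω
        constructor
        · intro _; trivial
        · intro _ j; exact j.elim0
      have hw : lbW p t α (fun j : Fin 0 => j.elim0) = 1 := by simp [lbW]
      rw [hcyl, hw, measure_univ]
      simp
  | succ n ih =>
      rw [lbT_succ]
      have key : ∀ x : Fin n → Bool,
          (∑ c : Bool, lbW p t α (Fin.snoc x c) * (μ (lbCyl X (n+1) (Fin.snoc x c))).toReal)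
            ≤ Real.exp (t^2 * A^2) * (lbW p t α x * (μ (lbCyl X n x)).toReal) := by
        intro x
        have hW := lbW_snoc p t α x
        have hC := lbCyl_snoc X n x
        set m : ℝ := (μ (lbCyl X n x)).toReal with hm_def
        set m1 : ℝ := (μ (lbCyl X n x ∩ {ω | X n ω = true})).toReal with hm1_def
        set m0 : ℝ := (μ (lbCyl X n x ∩ {ω | X n ω = false})).toReal with hm0_def
        have hsum : m1 + m0 = m := by
          rw [hm1_def, hm0_def, hm_def,
            ← ENNReal.toReal_add (measure_ne_top μ _) (measure_ne_top μ _)]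
          congr 1
          have hcompl : lbCyl X n x ∩ {ω | X n ω = false}
              = lbCyl X n x \ {ω | X n ω = true} := by
            ext ω; simp [Set.mem_diff]
          rw [hcompl]
          exact measure_inter_add_diff _ ((hXmeas n) (measurableSet_singleton true))
        have hpm : p * m ≤ m1 := by
          by_cases h0 : μ (lbCyl X n x) = 0
          · have hm0' : m = 0 := by rw [hm_def, h0]; simp
            have hm1z : μ (lbCyl X n x ∩ {ω | X n ω = true}) = 0 :=
              measure_mono_null Set.inter_subset_left h0
            rw [hm0', hm1_def, hm1z]; simp
          · have := hcond n x h0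
            have h2 : ENNReal.ofReal p * μ (lbCyl X n x)
                ≤ μ (lbCyl X n x ∩ {ω | X n ω = true}) := by
              rw [Set.inter_comm]; exact this
            have h3 := ENNReal.toReal_mono (measure_ne_top μ _) h2
            rwa [ENNReal.toReal_mul, ENNReal.toReal_ofReal hp0] at h3
        have hm1nn : 0 ≤ m1 := ENNReal.toReal_nonneg
        have hm0nn : 0 ≤ m0 := ENNReal.toReal_nonneg
        have htp := lb_two_point_bound hp0 hp1 (hαnn n) (hαA n) ht hm1nn hm0nn hsum hpm
        have hWpos := (lbW_pos p t α x).le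
        calc (∑ c : Bool, lbW p t α (Fin.snoc x c) * (μ (lbCyl X (n+1) (Fin.snoc x c))).toReal)
            = lbW p t α x * (m1 * Real.exp (t * α n * (p - 1))
                + m0 * Real.exp (t * α n * p)) := by
              have e1 : (if (true : Bool) = true then (1:ℝ) else 0) = 1 := rfl
              have e0 : (if (false : Bool) = true then (1:ℝ) else 0) = 0 := rfl
              rw [Fintype.sum_bool, hW true, hW false, hC true, hC false, e1, e0,
                ← hm1_def, ← hm0_def]
              ring
          _ ≤ lbW p t α x * (m * Real.exp (t^2 * A^2)) :=
              mul_le_mul_of_nonneg_left htp hWpos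
          _ = Real.exp (t^2 * A^2) * (lbW p t α x * m) := by ring
      calc (∑ x : Fin n → Bool, ∑ c : Bool,
              lbW p t α (Fin.snoc x c) * (μ (lbCyl X (n+1) (Fin.snoc x c))).toReal)
          ≤ ∑ x : Fin n → Bool,
              Real.exp (t^2 * A^2) * (lbW p t α x * (μ (lbCyl X n x)).toReal) :=
            Finset.sum_le_sum fun x _ => key x
        _ = Real.exp (t^2 * A^2) * lbT μ X p t α n := by
            rw [← Finset.mul_sum]; rfl
        _ ≤ Real.exp (t^2 * A^2) * Real.exp (n * (t^2 * A^2)) := by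
            apply mul_le_mul_of_nonneg_left ih (Real.exp_pos _).le
        _ = Real.exp ((n + 1 : ℕ) * (t^2 * A^2)) := by
            rw [← Real.exp_add]; congr 1; push_cast; ring

lemma lbMarkov (μ : Measure Ω) [IsProbabilityMeasure μ]
    (X : ℕ → Ω → Bool) (p t : ℝ) (ht : 0 ≤ t) (α : ℕ → ℝ) (n : ℕ) (ε : ℝ) :
    μ {ω | (n : ℝ) * ε ≤ ∑ i ∈ Finset.range n, α i * (p - if X i ω = true then (1:ℝ) else 0)}
      ≤ ENNReal.ofReal (Real.exp (-(t * ((n : ℝ) * ε))) * lbT μ X p t α n) := by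
  classical
  set SS : Finset (Fin n → Bool) := Finset.univ.filter
    (fun x : Fin n → Bool =>
      (n : ℝ) * ε ≤ ∑ j : Fin n, α (j : ℕ) * (p - if x j then (1:ℝ) else 0)) with hSS
  set E := {ω | (n : ℝ) * ε ≤ ∑ i ∈ Finset.range n,
      α i * (p - if X i ω = true then (1:ℝ) else 0)} with hE
  have hsub : E ⊆ ⋃ x ∈ SS, lbCyl X n x := by
    intro ω hω
    rw [Set.mem_iUnion₂]
    refine ⟨fun j => X (j : ℕ) ω, ?_, fun j => rfl⟩
    rw [hSS, Finset.mem_filter]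
    refine ⟨Finset.mem_univ _, ?_⟩
    rw [Fin.sum_univ_eq_sum_range (fun i => α i * (p - if X i ω = true then (1:ℝ) else 0))]
    exact hω
  have h1 : μ E ≤ ∑ x ∈ SS, μ (lbCyl X n x) :=
    (measure_mono hsub).trans (measure_biUnion_finset_le SS _)
  have hfin : (∑ x ∈ SS, μ (lbCyl X n x)) ≠ ⊤ :=
    (ENNReal.sum_lt_top.mpr fun x _ => measure_lt_top μ _).ne
  have h2 : (μ E).toReal ≤ ∑ x ∈ SS, (μ (lbCyl X n x)).toReal := by
    have := ENNReal.toReal_mono hfin h1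
    rwa [ENNReal.toReal_sum (fun x _ => measure_ne_top μ _)] at this
  have hwlb : ∀ x ∈ SS, Real.exp (t * ((n:ℝ) * ε)) ≤ lbW p t α x := by
    intro x hx
    rw [hSS, Finset.mem_filter] at hx
    have hwexp : lbW p t α x
        = Real.exp (t * ∑ j : Fin n, α (j : ℕ) * (p - if x j then (1:ℝ) else 0)) := by
      rw [lbW, ← Real.exp_sum, Finset.mul_sum]
      congr 1
      exact Finset.sum_congr rfl fun j _ => by ring
    rw [hwexp]
    exact Real.exp_le_exp.mpr (mul_le_mul_of_nonneg_left hx.2 ht)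
  have h3 : ∑ x ∈ SS, (μ (lbCyl X n x)).toReal
      ≤ Real.exp (-(t * ((n:ℝ) * ε))) * lbT μ X p t α n := by
    have step1 : ∑ x ∈ SS, (μ (lbCyl X n x)).toReal
        ≤ ∑ x ∈ SS, Real.exp (-(t * ((n:ℝ) * ε))) * (lbW p t α x * (μ (lbCyl X n x)).toReal) := by
      apply Finset.sum_le_sum
      intro x hx
      have hm : (0:ℝ) ≤ (μ (lbCyl X n x)).toReal := ENNReal.toReal_nonneg
      have hone : 1 ≤ Real.exp (-(t * ((n:ℝ) * ε))) * lbW p t α x := by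
        have := mul_le_mul_of_nonneg_left (hwlb x hx) (Real.exp_pos (-(t * ((n:ℝ) * ε)))).le
        rwa [← Real.exp_add, neg_add_cancel, Real.exp_zero] at this
      calc (μ (lbCyl X n x)).toReal
          = 1 * (μ (lbCyl X n x)).toReal := (one_mul _).symm
        _ ≤ (Real.exp (-(t * ((n:ℝ) * ε))) * lbW p t α x) * (μ (lbCyl X n x)).toReal :=
            mul_le_mul_of_nonneg_right hone hm
        _ = Real.exp (-(t * ((n:ℝ) * ε))) * (lbW p t α x * (μ (lbCyl X n x)).toReal) := by ring
    have step2 : ∑ x ∈ SS, Real.exp (-(t * ((n:ℝ) * ε))) * (lbW p t α x * (μ (lbCyl X n x)).toReal)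
        ≤ ∑ x : Fin n → Bool,
            Real.exp (-(t * ((n:ℝ) * ε))) * (lbW p t α x * (μ (lbCyl X n x)).toReal) := by
      apply Finset.sum_le_sum_of_subset_of_nonneg (Finset.subset_univ _)
      intro x _ _
      exact mul_nonneg (Real.exp_pos _).le
        (mul_nonneg (lbW_pos p t α x).le ENNReal.toReal_nonneg)
    calc _ ≤ _ := step1
      _ ≤ _ := step2
      _ = Real.exp (-(t * ((n:ℝ) * ε))) * lbT μ X p t α n := by
          rw [← Finset.mul_sum]; rfl
  calc μ E = ENNReal.ofReal ((μ E).toReal) := (ENNReal.ofReal_toReal (measure_ne_top μ _)).symm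
    _ ≤ ENNReal.ofReal (Real.exp (-(t * ((n:ℝ) * ε))) * lbT μ X p t α n) :=
        ENNReal.ofReal_le_ofReal (h2.trans h3)

end LBAux

lemma lb_det (p : ℝ) (hp0 : 0 ≤ p) (hp1 : p ≤ 1)
    (α : ℕ → ℝ) (hαnn : ∀ i, 0 ≤ α i) (A : ℝ) (hA : 0 < A) (hαA : ∀ i, α i ≤ A)
    (b : ℕ → ℝ) (hb0 : ∀ i, 0 ≤ b i) (hb1 : ∀ i, b i ≤ 1)
    (h : ∀ k : ℕ, ∀ᶠ n : ℕ in atTop,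
      (∑ i ∈ Finset.range n, α i * (p - b i)) < (n : ℝ) * (1 / ((k : ℝ) + 1))) :
    (Filter.limsup (fun n : ℕ => (1 / (n : ℝ)) * ∑ i ∈ Finset.range n, α i * b i) atTop
        ≥ p * Filter.limsup (fun n : ℕ => (1 / (n : ℝ)) * ∑ i ∈ Finset.range n, α i) atTop)
      ∧ (Filter.liminf (fun n : ℕ => (1 / (n : ℝ)) * ∑ i ∈ Finset.range n, α i * b i) atTop
        ≥ p * Filter.liminf (fun n : ℕ => (1 / (n : ℝ)) * ∑ i ∈ Finset.range n, α i) atTop) := by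
  set g : ℕ → ℝ := fun n => (1 / (n : ℝ)) * ∑ i ∈ Finset.range n, α i * b i with hg
  set f : ℕ → ℝ := fun n => (1 / (n : ℝ)) * ∑ i ∈ Finset.range n, α i with hf
  have hg0 : ∀ n, 0 ≤ g n := fun n =>
    mul_nonneg (by positivity) (Finset.sum_nonneg fun i _ => mul_nonneg (hαnn i) (hb0 i))
  have hgf : ∀ n, g n ≤ f n := fun n => by
    apply mul_le_mul_of_nonneg_left _ (by positivity)
    apply Finset.sum_le_sum
    intro i _
    calc α i * b i ≤ α i * 1 := mul_le_mul_of_nonneg_left (hb1 i) (hαnn i)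
      _ = α i := mul_one _
  have hf0 : ∀ n, 0 ≤ f n := fun n =>
    mul_nonneg (by positivity) (Finset.sum_nonneg fun i _ => hαnn i)
  have hfA : ∀ n, f n ≤ A := by
    intro n
    rcases Nat.eq_zero_or_pos n with hn | hn
    · subst hn; simp [hf]; exact hA.le
    · have hnp : (0:ℝ) < n := by exact_mod_cast hn
      have hsum : ∑ i ∈ Finset.range n, α i ≤ n * A := by
        calc ∑ i ∈ Finset.range n, α i ≤ ∑ _i ∈ Finset.range n, A :=
            Finset.sum_le_sum fun i _ => hαA i
          _ = n * A := by simp [mul_comm]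
      calc f n ≤ (1 / (n:ℝ)) * ((n:ℝ) * A) :=
          mul_le_mul_of_nonneg_left hsum (by positivity)
        _ = A := by field_simp
  have hgbdle : IsBoundedUnder (· ≤ ·) atTop g :=
    isBoundedUnder_of ⟨A, fun n => (hgf n).trans (hfA n)⟩
  have hgbdge : IsBoundedUnder (· ≥ ·) atTop g := isBoundedUnder_of ⟨0, fun n => hg0 n⟩
  have hfbdle : IsBoundedUnder (· ≤ ·) atTop f := isBoundedUnder_of ⟨A, hfA⟩
  have hfbdge : IsBoundedUnder (· ≥ ·) atTop f := isBoundedUnder_of ⟨0, hf0⟩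
  have hev : ∀ k : ℕ, ∀ᶠ n : ℕ in atTop, p * f n - g n < 1 / ((k : ℝ) + 1) := by
    intro k
    filter_upwards [h k, eventually_ge_atTop 1] with n hn hn1
    have hnp : (0:ℝ) < n := by exact_mod_cast hn1
    have hexp : ∑ i ∈ Finset.range n, α i * (p - b i)
        = p * ∑ i ∈ Finset.range n, α i - ∑ i ∈ Finset.range n, α i * b i := by
      rw [Finset.mul_sum, ← Finset.sum_sub_distrib]
      exact Finset.sum_congr rfl fun i _ => by ring
    rw [hexp] at hn
    have := mul_lt_mul_of_pos_left hn (by positivity : (0:ℝ) < 1 / n)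
    calc p * f n - g n
        = (1/(n:ℝ)) * (p * ∑ i ∈ Finset.range n, α i - ∑ i ∈ Finset.range n, α i * b i) := by
          rw [hf, hg]; ring
      _ < (1/(n:ℝ)) * ((n:ℝ) * (1 / ((k : ℝ) + 1))) := this
      _ = 1 / ((k : ℝ) + 1) := by field_simp
  constructor
  · by_cases hp : p = 0
    · subst hp
      rw [zero_mul]
      exact le_limsup_of_frequently_le ((Eventually.of_forall hg0).frequently) hgbdle
    · have hppos : 0 < p := lt_of_le_of_ne hp0 (Ne.symm hp)
      apply le_of_forall_lt
      intro c hc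
      set L := Filter.limsup f atTop with hL
      set c' := (c + p * L) / 2 with hc'
      have hcc' : c < c' := by rw [hc']; linarith
      have hc'L : c' < p * L := by rw [hc']; linarith
      obtain ⟨k, hk⟩ := exists_nat_one_div_lt (by linarith : (0:ℝ) < (p * L - c') / 2)
      set ε := 1 / ((k : ℝ) + 1) with hε
      have hεpos : 0 < ε := by positivity
      have hεlt : ε < p * L - c' := by
        rw [hε]; calc 1 / ((k:ℝ)+1) < (p*L - c')/2 := hk
          _ ≤ p * L - c' := by linarith
      have hb0' : (c' + ε) / p < L := by
        rw [div_lt_iff₀ hppos]; linarith [mul_comm L p]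
      have hfreq : ∃ᶠ n in atTop, (c' + ε) / p < f n :=
        frequently_lt_of_lt_limsup hfbdge.isCoboundedUnder_le hb0'
      have hcomb := hfreq.and_eventually (hev k)
      have hfreq2 : ∃ᶠ n in atTop, c' ≤ g n := by
        apply hcomb.mono
        rintro n ⟨h1, h2⟩
        have : c' + ε < p * f n := by
          rw [div_lt_iff₀ hppos] at h1; linarith [mul_comm (f n) p]
        linarith
      have := le_limsup_of_frequently_le hfreq2 hgbdle
      exact lt_of_lt_of_le hcc' this
  · by_cases hp : p = 0
    · subst hp
      rw [zero_mul]
      exact le_liminf_of_le hgbdle.isCoboundedUnder_ge (Eventually.of_forall hg0)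
    · have hppos : 0 < p := lt_of_le_of_ne hp0 (Ne.symm hp)
      apply le_of_forall_lt
      intro c hc
      set L := Filter.liminf f atTop with hL
      set c' := (c + p * L) / 2 with hc'
      have hcc' : c < c' := by rw [hc']; linarith
      have hc'L : c' < p * L := by rw [hc']; linarith
      obtain ⟨k, hk⟩ := exists_nat_one_div_lt (by linarith : (0:ℝ) < (p * L - c') / 2)
      set ε := 1 / ((k : ℝ) + 1) with hε
      have hεpos : 0 < ε := by positivity
      have hεlt : ε < p * L - c' := by
        rw [hε]; calc 1 / ((k:ℝ)+1) < (p*L - c')/2 := hk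
          _ ≤ p * L - c' := by linarith
      have hb0' : (c' + ε) / p < L := by
        rw [div_lt_iff₀ hppos]; linarith [mul_comm L p]
      have hevf : ∀ᶠ n in atTop, (c' + ε) / p < f n :=
        eventually_lt_of_lt_liminf hb0' hfbdge
      have hcomb := hevf.and (hev k)
      have hev2 : ∀ᶠ n in atTop, c' ≤ g n := by
        apply hcomb.mono
        rintro n ⟨h1, h2⟩
        have : c' + ε < p * f n := by
          rw [div_lt_iff₀ hppos] at h1; linarith [mul_comm (f n) p]
        linarith
      have := le_liminf_of_le hgbdle.isCoboundedUnder_ge hev2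
      exact lt_of_lt_of_le hcc' this

/-- Lower-bound half of the paper's Lemma 9: if `X` is a binary process whose conditional
probability of a one given any past (of positive probability) is at least `p`, and `α` is a
bounded sequence of nonnegative reals, then almost surely
`limsup (1/n) ∑_{i<n} α i X i ≥ p * limsup (1/n) ∑_{i<n} α i` and
`liminf (1/n) ∑_{i<n} α i X i ≥ p * liminf (1/n) ∑_{i<n} α i`. -/
theorem limit_bounds_lower
    {Ω : Type*} [MeasurableSpace Ω] (μ : Measure Ω) [IsProbabilityMeasure μ]
    (p : ℝ) (hp0 : 0 ≤ p) (hp1 : p ≤ 1)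
    (X : ℕ → Ω → Bool) (hXmeas : ∀ i, Measurable (X i))
    (hcond : ∀ i : ℕ, ∀ x : Fin i → Bool,
      μ {ω | ∀ j : Fin i, X (j : ℕ) ω = x j} ≠ 0 →
      μ ({ω | X i ω = true} ∩ {ω | ∀ j : Fin i, X (j : ℕ) ω = x j})
        ≥ ENNReal.ofReal p * μ {ω | ∀ j : Fin i, X (j : ℕ) ω = x j})
    (α : ℕ → ℝ) (hαnn : ∀ i, 0 ≤ α i) (hαbd : ∃ A, ∀ i, α i ≤ A) :
    ∀ᵐ ω ∂μ,
      (Filter.limsup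
          (fun n : ℕ => (1 / (n : ℝ)) * ∑ i ∈ Finset.range n,
            α i * (if X i ω = true then (1 : ℝ) else 0)) atTop
        ≥ p * Filter.limsup
            (fun n : ℕ => (1 / (n : ℝ)) * ∑ i ∈ Finset.range n, α i) atTop)
      ∧ (Filter.liminf
          (fun n : ℕ => (1 / (n : ℝ)) * ∑ i ∈ Finset.range n,
            α i * (if X i ω = true then (1 : ℝ) else 0)) atTop
        ≥ p * Filter.liminf
            (fun n : ℕ => (1 / (n : ℝ)) * ∑ i ∈ Finset.range n, α i) atTop) := by
  obtain ⟨A0, hA0⟩ := hαbd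
  set A : ℝ := max A0 1 with hA_def
  have hA : 0 < A := lt_of_lt_of_le one_pos (le_max_right _ _)
  have hαA : ∀ i, α i ≤ A := fun i => (hA0 i).trans (le_max_left _ _)
  -- Borel-Cantelli for each k
  have hBC : ∀ k : ℕ, ∀ᵐ ω ∂μ, ∀ᶠ n : ℕ in atTop,
      (∑ i ∈ Finset.range n, α i * (p - if X i ω = true then (1:ℝ) else 0))
        < (n : ℝ) * (1 / ((k : ℝ) + 1)) := by
    intro k
    set ε : ℝ := 1 / ((k : ℝ) + 1) with hε
    have hεpos : 0 < ε := by positivity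
    set t : ℝ := ε / (2 * A ^ 2) with ht_def
    have ht : 0 ≤ t := by positivity
    set s : ℕ → Set Ω := fun n => {ω | (n : ℝ) * ε ≤ ∑ i ∈ Finset.range n,
        α i * (p - if X i ω = true then (1:ℝ) else 0)} with hs
    set r : ℝ := Real.exp (-(ε^2 / (4 * A^2))) with hr
    have hr0 : 0 ≤ r := (Real.exp_pos _).le
    have hr1 : r < 1 := by
      rw [hr, Real.exp_lt_one_iff]
      have : 0 < ε^2 / (4 * A^2) := by positivity
      linarith
    have hμs : ∀ n, μ (s n) ≤ ENNReal.ofReal (r ^ n) := by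
      intro n
      calc μ (s n) ≤ ENNReal.ofReal (Real.exp (-(t * ((n : ℝ) * ε))) * lbT μ X p t α n) :=
            lbMarkov μ X p t ht α n ε
        _ ≤ ENNReal.ofReal (r ^ n) := by
            apply ENNReal.ofReal_le_ofReal
            calc Real.exp (-(t * ((n : ℝ) * ε))) * lbT μ X p t α n
                ≤ Real.exp (-(t * ((n : ℝ) * ε))) * Real.exp ((n:ℝ) * (t^2 * A^2)) :=
                  mul_le_mul_of_nonneg_left
                    (lbT_le μ p hp0 hp1 X hXmeas hcond α hαnn A hαA t ht n)
                    (Real.exp_pos _).le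
              _ = Real.exp ((n:ℝ) * (-(ε^2 / (4 * A^2)))) := by
                  rw [← Real.exp_add]
                  congr 1
                  rw [ht_def]
                  field_simp
                  ring
              _ = r ^ n := by rw [hr, ← Real.exp_nat_mul]
    have hsum : (∑' n, μ (s n)) ≠ ⊤ := by
      have h1 : (∑' n, μ (s n)) ≤ ∑' n, ENNReal.ofReal (r ^ n) :=
        ENNReal.tsum_le_tsum hμs
      have h2 : (∑' n : ℕ, ENNReal.ofReal (r ^ n))
          = ENNReal.ofReal (∑' n : ℕ, r ^ n) :=
        (ENNReal.ofReal_tsum_of_nonneg (fun n => pow_nonneg hr0 n)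
          (summable_geometric_of_lt_one hr0 hr1)).symm
      rw [h2] at h1
      exact (lt_of_le_of_lt h1 ENNReal.ofReal_lt_top).ne
    filter_upwards [MeasureTheory.ae_eventually_notMem hsum] with ω hω
    apply hω.mono
    intro n hn
    exact lt_of_not_ge fun hle => hn hle
  have hAE := (MeasureTheory.ae_all_iff).mpr hBC
  filter_upwards [hAE] with ω hω
  exact lb_det p hp0 hp1 α hαnn A hA hαA
    (fun i => if X i ω = true then (1:ℝ) else 0)
    (fun i => by split <;> norm_num)
    (fun i => by split <;> norm_num)
    hω
end

section
/- Let x^∞ be a sequence over a finite alphabet 𝒳. Then both limits lim_{k→∞} limsup_{n→∞} (1/k) Ĥ^k(x^n) and lim_{k→∞} liminf_{n→∞} (1/k) Ĥ^k(x^n) exist (i.e., for the block-by-block empirical entropy per symbol, the limsup-in-k of the limsup-in-n equals its liminf-in-k, and likewise for the liminf-in-n version). -/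
open Filter

/-- Base-2 Shannon entropy of a finitely-supported distribution given as a function. -/
noncomputable def ent2 {β : Type*} [Fintype β] (q : β → ℝ) : ℝ :=
  ∑ b, -(q b * Real.logb 2 (q b))

/-- The `k`-th order block-by-block empirical distribution of `x^n`: the fraction of the
`⌊n/k⌋` disjoint `k`-blocks of `x^n` equal to a given word `w`. -/
noncomputable def blockDist {𝒳 : Type*} [DecidableEq 𝒳] (x : ℕ → 𝒳) (k n : ℕ)
    (w : Fin k → 𝒳) : ℝ :=
  (((Finset.range (n / k)).filter
      (fun i => (fun j : Fin k => x (k * i + (j : ℕ))) = w)).card : ℝ) / ((n / k : ℕ) : ℝ)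

/-- The `k`-th order block-by-block empirical entropy `Ĥ^k(x^n)` (base 2). -/
noncomputable def Hblock {𝒳 : Type*} [Fintype 𝒳] [DecidableEq 𝒳] (x : ℕ → 𝒳) (k n : ℕ) : ℝ :=
  ent2 (blockDist x k n)

/-- The `k`-th order sliding-window empirical distribution of `x^n`: the fraction of the
`n−k+1` length-`k` windows of `x^n` equal to a given word `w`. -/
noncomputable def swDist {𝒳 : Type*} [DecidableEq 𝒳] (x : ℕ → 𝒳) (k n : ℕ)
    (w : Fin k → 𝒳) : ℝ :=
  (((Finset.range (n - k + 1)).filter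
      (fun i => (fun j : Fin k => x (i + (j : ℕ))) = w)).card : ℝ) / ((n - k + 1 : ℕ) : ℝ)

/-- The `k`-th order sliding-window empirical entropy `Ĥ^k_sw(x^n)` (base 2). -/
noncomputable def Hsw {𝒳 : Type*} [Fintype 𝒳] [DecidableEq 𝒳] (x : ℕ → 𝒳) (k n : ℕ) : ℝ :=
  ent2 (swDist x k n)


namespace LemmaFive

open Finset Real

/-- Gibbs' inequality. -/
lemma gibbs {β : Type*} [Fintype β] (p q : β → ℝ) (hp : ∀ b, 0 ≤ p b)
    (hps : ∑ b, p b = 1) (hq : ∀ b, 0 < q b) (hqs : ∑ b, q b ≤ 1) :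
    ent2 p ≤ ∑ b, -(p b * Real.logb 2 (q b)) := by
  have hlog2 : (0:ℝ) < Real.log 2 := Real.log_pos one_lt_two
  have key : ∀ b, -(p b * Real.logb 2 (p b)) ≤
      -(p b * Real.logb 2 (q b)) + (q b - p b) / Real.log 2 := by
    intro b
    rcases eq_or_lt_of_le (hp b) with h | h
    · rw [← h]
      have h0 : (0:ℝ) ≤ q b / Real.log 2 := div_nonneg (hq b).le hlog2.le
      simpa using h0
    · have hq' := hq b
      have hlog : Real.log (q b / p b) ≤ q b / p b - 1 :=
        Real.log_le_sub_one_of_pos (by positivity)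
      rw [Real.log_div (ne_of_gt hq') (ne_of_gt h)] at hlog
      have hmul : p b * (Real.log (q b) - Real.log (p b)) ≤ q b - p b := by
        have h2 := mul_le_mul_of_nonneg_left hlog (le_of_lt h)
        calc p b * (Real.log (q b) - Real.log (p b)) ≤ p b * (q b / p b - 1) := h2
        _ = q b - p b := by field_simp
      have h3 : -(p b * Real.log (p b)) ≤ -(p b * Real.log (q b)) + (q b - p b) := by
        nlinarith
      unfold Real.logb
      calc -(p b * (Real.log (p b) / Real.log 2)) = (-(p b * Real.log (p b))) / Real.log 2 := by
            ring
      _ ≤ (-(p b * Real.log (q b)) + (q b - p b)) / Real.log 2 := by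
            gcongr
      _ = -(p b * (Real.log (q b) / Real.log 2)) + (q b - p b) / Real.log 2 := by ring
  have h4 : ent2 p ≤ ∑ b, (-(p b * Real.logb 2 (q b)) + (q b - p b) / Real.log 2) :=
    Finset.sum_le_sum (fun b _ => key b)
  have h5 : ∑ b, (-(p b * Real.logb 2 (q b)) + (q b - p b) / Real.log 2)
      = (∑ b, -(p b * Real.logb 2 (q b))) + ((∑ b, q b) - 1) / Real.log 2 := by
    rw [Finset.sum_add_distrib]
    congr 1
    rw [← Finset.sum_div, Finset.sum_sub_distrib, hps]
  have h6 : ((∑ b, q b) - 1) / Real.log 2 ≤ 0 :=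
    div_nonpos_of_nonpos_of_nonneg (by linarith) (le_of_lt hlog2)
  rw [h5] at h4
  linarith


section Words

variable {𝒳 : Type*} [Fintype 𝒳] [DecidableEq 𝒳]

/-- Glue a word of length `u` and a word of length `v` into a word of length `L = u + v`. -/
def glue {u v L : ℕ} (h : u + v = L) (a : Fin u → 𝒳) (b : Fin v → 𝒳) : Fin L → 𝒳 :=
  fun p => if hp : (p : ℕ) < u then a ⟨p, hp⟩ else b ⟨(p : ℕ) - u, by omega⟩

lemma sum_glue {u v L : ℕ} (h : u + v = L) (G : (Fin L → 𝒳) → ℝ) :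
    ∑ w : Fin L → 𝒳, G w = ∑ a : Fin u → 𝒳, ∑ b : Fin v → 𝒳, G (glue h a b) := by
  have hbij : Function.Bijective (fun ab : (Fin u → 𝒳) × (Fin v → 𝒳) => glue h ab.1 ab.2) := by
    rw [Function.bijective_iff_has_inverse]
    refine ⟨fun w => (fun i => w ⟨(i : ℕ), by omega⟩, fun i => w ⟨u + (i : ℕ), by omega⟩), ?_, ?_⟩
    · rintro ⟨a, b⟩
      refine Prod.ext ?_ ?_ <;> funext i <;> simp only [glue]
      · rw [dif_pos i.isLt]
      · rw [dif_neg (by omega)]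
        congr 1
        ext
        simp
    · intro w
      funext p
      by_cases hp : (p : ℕ) < u
      · simp only [glue]
        rw [dif_pos hp]
      · simp only [glue]
        rw [dif_neg hp]
        congr 1
        ext
        simp
        omega
  calc ∑ w : Fin L → 𝒳, G w
      = ∑ ab : (Fin u → 𝒳) × (Fin v → 𝒳), G (glue h ab.1 ab.2) :=
        (Fintype.sum_bijective _ hbij _ _ (fun ab => rfl)).symm
    _ = ∑ a : Fin u → 𝒳, ∑ b : Fin v → 𝒳, G (glue h a b) :=
        Fintype.sum_prod_type (f := fun ab : (Fin u → 𝒳) × (Fin v → 𝒳) => G (glue h ab.1 ab.2))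

/-- Extract the length-`k` subword starting at position `a`. -/
def subw (x : ℕ → 𝒳) {L : ℕ} (k a : ℕ) (w : Fin L → 𝒳) : Fin k → 𝒳 :=
  fun t => if h : a + (t : ℕ) < L then w ⟨a + (t : ℕ), h⟩ else x 0

lemma sum_one_words (L : ℕ) :
    ∑ _w : Fin L → 𝒳, (1:ℝ) = (Fintype.card 𝒳 : ℝ) ^ L := by
  rw [Finset.sum_const, Finset.card_univ]
  simp [Fintype.card_fun]

lemma P1 (x : ℕ → 𝒳) {L : ℕ} (k s : ℕ) (hk : 0 < k) (hsk : s + k ≤ L)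
    (F : (Fin k → 𝒳) → ℝ) :
    ∑ w : Fin L → 𝒳, F (subw x k s w)
      = (Fintype.card 𝒳 : ℝ) ^ (L - k) * ∑ u, F u := by
  have hL : (s + k) + (L - (s + k)) = L := by omega
  rw [sum_glue hL]
  have key : ∀ (a : Fin (s+k) → 𝒳) (b : Fin (L - (s+k)) → 𝒳),
      subw x k s (glue hL a b) = subw x k s a := by
    intro a b
    funext t
    have ht : s + (t : ℕ) < s + k := by omega
    simp only [subw, glue]
    rw [dif_pos (by omega : s + (t : ℕ) < L), dif_pos ht, dif_pos ht]
  have step1 : ∑ a : Fin (s+k) → 𝒳, ∑ b : Fin (L - (s+k)) → 𝒳, F (subw x k s (glue hL a b))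
      = (Fintype.card 𝒳 : ℝ) ^ (L - (s+k)) * ∑ a : Fin (s+k) → 𝒳, F (subw x k s a) := by
    rw [Finset.mul_sum]
    apply Finset.sum_congr rfl
    intro a _
    rw [Finset.sum_congr rfl (fun b _ => by rw [key a b])]
    rw [Finset.sum_const, Finset.card_univ]
    simp [Fintype.card_fun, mul_comm]
  rw [step1]
  -- now compute the inner sum by splitting W (s+k) at s
  have hsk' : s + k = s + k := rfl
  have inner : ∑ a : Fin (s+k) → 𝒳, F (subw x k s a)
      = (Fintype.card 𝒳 : ℝ) ^ s * ∑ u, F u := by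
    rw [sum_glue (rfl : s + k = s + k) (fun a => F (subw x k s a))]
    have key2 : ∀ (c : Fin s → 𝒳) (d : Fin k → 𝒳), subw x k s (glue rfl c d) = d := by
      intro c d
      funext t
      simp only [subw, glue]
      rw [dif_pos (by omega : s + (t : ℕ) < s + k), dif_neg (by omega : ¬ (s + (t:ℕ) < s))]
      congr 1
      ext
      simp
    rw [Finset.sum_congr rfl (fun c _ => Finset.sum_congr rfl (fun d _ => by rw [key2 c d]))]
    rw [Finset.sum_const, Finset.card_univ, nsmul_eq_mul]
    simp [Fintype.card_fun]
  rw [inner, ← mul_assoc, ← pow_add]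
  congr 2
  omega

lemma Pm (x : ℕ → 𝒳) (k : ℕ) (hk : 0 < k) (F : (Fin k → 𝒳) → ℝ) (hF : ∑ u, F u = 1) :
    ∀ (m : ℕ) {L : ℕ} (s : ℕ), s + m * k ≤ L →
    ∑ w : Fin L → 𝒳, ∏ j ∈ Finset.range m, F (subw x k (s + j * k) w)
      = (Fintype.card 𝒳 : ℝ) ^ (L - m * k) := by
  intro m
  induction m with
  | zero =>
    intro L s hs
    simp [sum_one_words]
  | succ m ih =>
    intro L s hs
    rw [Nat.succ_mul] at hs
    have hL : (s + k) + (L - (s + k)) = L := by omega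
    rw [sum_glue hL]
    have key : ∀ (a : Fin (s+k) → 𝒳) (b : Fin (L - (s+k)) → 𝒳),
        ∏ j ∈ Finset.range (m+1), F (subw x k (s + j * k) (glue hL a b))
        = (∏ j ∈ Finset.range m, F (subw x k (0 + j * k) b)) * F (subw x k s a) := by
      intro a b
      rw [Finset.prod_range_succ']
      congr 1
      · apply Finset.prod_congr rfl
        intro j hj
        have hjm : j < m := Finset.mem_range.mp hj
        have hjk : (j+1) * k = j * k + k := by ring
        have hjm' : (j+1) * k ≤ m * k := Nat.mul_le_mul_right k (Nat.succ_le_of_lt hjm)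
        congr 1
        funext t
        have htk := t.isLt
        have h1 : s + (j+1) * k + (t : ℕ) < L := by omega
        have h2 : 0 + j * k + (t : ℕ) < L - (s + k) := by omega
        simp only [subw, glue]
        rw [dif_pos h1, dif_pos h2, dif_neg (by omega : ¬ (s + (j+1) * k + (t:ℕ) < s + k))]
        congr 1
        ext
        simp
        omega
      · rw [show s + 0 * k = s from by ring]
        congr 1
        funext t
        have htk := t.isLt
        have h1 : s + (t : ℕ) < L := by omega
        have h2 : s + (t : ℕ) < s + k := by omega
        simp only [subw, glue]
        rw [dif_pos h1, dif_pos h2, dif_pos h2]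
    rw [Finset.sum_congr rfl (fun a _ => Finset.sum_congr rfl (fun b _ => key a b))]
    have factored : ∑ a : Fin (s+k) → 𝒳, ∑ b : Fin (L - (s+k)) → 𝒳,
        (∏ j ∈ Finset.range m, F (subw x k (0 + j * k) b)) * F (subw x k s a)
        = (∑ b : Fin (L - (s+k)) → 𝒳, ∏ j ∈ Finset.range m, F (subw x k (0 + j * k) b))
          * (∑ a : Fin (s+k) → 𝒳, F (subw x k s a)) := by
      rw [Finset.sum_comm]
      rw [Finset.sum_mul]
      apply Finset.sum_congr rfl
      intro b _
      rw [Finset.mul_sum]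
    rw [factored]
    rw [ih 0 (by omega : 0 + m * k ≤ L - (s + k))]
    rw [P1 x k s (by omega) (le_refl (s+k)) F]
    rw [hF, mul_one, ← pow_add]
    congr 1
    rw [Nat.succ_mul]
    omega


section Empirical

variable (x : ℕ → 𝒳)

/-- The `i`-th `k`-block of the sequence. -/
def blk (k i : ℕ) : Fin k → 𝒳 := fun j => x (k * i + (j : ℕ))

lemma blockDist_eq (k n : ℕ) (w : Fin k → 𝒳) :
    blockDist x k n w
      = (((Finset.range (n / k)).filter (fun i => blk x k i = w)).card : ℝ) / ((n / k : ℕ) : ℝ) :=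
  rfl

lemma blockDist_nonneg (k n : ℕ) (w : Fin k → 𝒳) : 0 ≤ blockDist x k n w := by
  rw [blockDist_eq]
  positivity

lemma blockDist_le_one (k n : ℕ) (w : Fin k → 𝒳) : blockDist x k n w ≤ 1 := by
  rw [blockDist_eq]
  rcases Nat.eq_zero_or_pos (n / k) with h | h
  · simp [h]
  · rw [div_le_one (by exact_mod_cast h)]
    have hcl := Finset.card_filter_le (Finset.range (n / k)) (fun i => blk x k i = w)
    rw [Finset.card_range] at hcl
    exact_mod_cast hcl

lemma sum_blockDist_mul (k n : ℕ) (f : (Fin k → 𝒳) → ℝ) :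
    ∑ w, blockDist x k n w * f w
      = (((n / k : ℕ) : ℝ))⁻¹ * ∑ i ∈ Finset.range (n / k), f (blk x k i) := by
  have hfib : ∑ w : Fin k → 𝒳, ∑ i ∈ (Finset.range (n / k)).filter (fun i => blk x k i = w),
      f (blk x k i) = ∑ i ∈ Finset.range (n / k), f (blk x k i) :=
    Finset.sum_fiberwise_of_maps_to (fun i _ => Finset.mem_univ _) _
  rw [← hfib, Finset.mul_sum]
  apply Finset.sum_congr rfl
  intro w _
  have hinner : ∑ i ∈ (Finset.range (n / k)).filter (fun i => blk x k i = w), f (blk x k i)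
      = (((Finset.range (n / k)).filter (fun i => blk x k i = w)).card : ℝ) * f w := by
    rw [Finset.sum_congr rfl (fun i hi => by
      rw [(Finset.mem_filter.mp hi).2])]
    rw [Finset.sum_const, nsmul_eq_mul]
  rw [hinner, blockDist_eq]
  ring

lemma sum_blockDist (k n : ℕ) (h : 0 < n / k) : ∑ w, blockDist x k n w = 1 := by
  have := sum_blockDist_mul x k n (fun _ => (1:ℝ))
  simp only [mul_one] at this
  rw [this, Finset.sum_const, Finset.card_range, nsmul_eq_mul, mul_one]
  rw [inv_mul_cancel₀]
  exact_mod_cast Nat.pos_iff_ne_zero.mp h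

lemma Hblock_nonneg (k n : ℕ) : 0 ≤ Hblock x k n := by
  apply Finset.sum_nonneg
  intro w _
  rcases eq_or_lt_of_le (blockDist_nonneg x k n w) with h | h
  · rw [← h]; simp
  · have h1 : Real.logb 2 (blockDist x k n w) ≤ 0 :=
      Real.logb_nonpos one_lt_two (blockDist_nonneg x k n w) (blockDist_le_one x k n w)
    have := mul_nonneg h.le (neg_nonneg.mpr h1)
    nlinarith

lemma card_pos_of_seq (y : ℕ → 𝒳) : 0 < Fintype.card 𝒳 := Fintype.card_pos_iff.mpr ⟨y 0⟩

lemma Hblock_le (k n : ℕ) (hk : 0 < k) :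
    Hblock x k n ≤ (k : ℝ) * Real.logb 2 (Fintype.card 𝒳) := by
  have hM : (1:ℝ) ≤ (Fintype.card 𝒳 : ℝ) := by exact_mod_cast card_pos_of_seq x
  have hc : 0 ≤ Real.logb 2 (Fintype.card 𝒳) := Real.logb_nonneg one_lt_two hM
  rcases Nat.eq_zero_or_pos (n / k) with h | h
  · have hz : ∀ w : Fin k → 𝒳, blockDist x k n w = 0 := by
      intro w
      rw [blockDist_eq, h]
      simp
    have : Hblock x k n = 0 := by
      unfold Hblock ent2
      have hterm : ∀ w ∈ Finset.univ,
          -(blockDist x k n w * Real.logb 2 (blockDist x k n w)) = 0 := by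
        intro w _
        rw [hz w]
        simp
      rw [Finset.sum_congr rfl hterm]
      simp
    rw [this]
    positivity
  · have hq : ∀ _w : Fin k → 𝒳, (0:ℝ) < ((Fintype.card 𝒳 : ℝ) ^ k)⁻¹ := by
      intro w
      have : (0:ℝ) < (Fintype.card 𝒳 : ℝ) ^ k := by positivity
      positivity
    have hqs : ∑ _w : Fin k → 𝒳, ((Fintype.card 𝒳 : ℝ) ^ k)⁻¹ ≤ 1 := by
      rw [Finset.sum_const, Finset.card_univ, nsmul_eq_mul]
      rw [Fintype.card_fun, Fintype.card_fin]
      rw [Nat.cast_pow, mul_inv_cancel₀]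
      positivity
    have := gibbs (blockDist x k n) (fun _ => ((Fintype.card 𝒳 : ℝ) ^ k)⁻¹)
      (blockDist_nonneg x k n) (sum_blockDist x k n h) hq hqs
    refine this.trans (le_of_eq ?_)
    have hlogb : Real.logb 2 (((Fintype.card 𝒳 : ℝ) ^ k)⁻¹)
        = -((k : ℝ) * Real.logb 2 (Fintype.card 𝒳)) := by
      rw [Real.logb_inv, Real.logb_pow]
    calc ∑ w, -(blockDist x k n w * Real.logb 2 (((Fintype.card 𝒳 : ℝ) ^ k)⁻¹))
        = ∑ w, blockDist x k n w * ((k : ℝ) * Real.logb 2 (Fintype.card 𝒳)) := by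
          apply Finset.sum_congr rfl
          intro w _
          simp only [hlogb]
          ring
      _ = (∑ w, blockDist x k n w) * ((k : ℝ) * Real.logb 2 (Fintype.card 𝒳)) := by
          rw [Finset.sum_mul]
      _ = (k : ℝ) * Real.logb 2 (Fintype.card 𝒳) := by
          rw [sum_blockDist x k n h, one_mul]


/-- The master per-`n` inequality, proved by a coding argument: encode each `k'`-block
by aligning to the global `k`-grid and using a Shannon code for the empirical `k`-block
distribution. -/
lemma master {k k' n : ℕ} (hk : 0 < k) (hkk : k ≤ k') (hn : k' ≤ n) :
    Hblock x k' n ≤ Real.logb 2 k + 2 * (k : ℝ) * Real.logb 2 (Fintype.card 𝒳)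
      + ((n / k : ℕ) : ℝ) / ((n / k' : ℕ) : ℝ) * (Hblock x k n + 1) := by
  have hk' : 0 < k' := lt_of_lt_of_le hk hkk
  have hM : 0 < Fintype.card 𝒳 := card_pos_of_seq x
  have hM1 : (1:ℝ) ≤ (Fintype.card 𝒳 : ℝ) := by exact_mod_cast hM
  have hMR : (0:ℝ) < (Fintype.card 𝒳 : ℝ) := by exact_mod_cast hM
  have hN : 0 < n / k' := Nat.div_pos hn hk'
  have hNk : 0 < n / k := Nat.div_pos (le_trans hkk hn) hk
  have hNR : (0:ℝ) < ((n / k' : ℕ) : ℝ) := by exact_mod_cast hN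
  have hkR : (0:ℝ) < (k : ℝ) := by exact_mod_cast hk
  set M : ℝ := (Fintype.card 𝒳 : ℝ) with hMdef
  -- the smoothed k-block code
  set p : (Fin k → 𝒳) → ℝ := blockDist x k n with hpdef
  set q : (Fin k → 𝒳) → ℝ := fun w => (p w + (M ^ k)⁻¹) / 2 with hqdef
  have hq_pos : ∀ w, 0 < q w := by
    intro w
    have h1 : (0:ℝ) < (M ^ k)⁻¹ := by positivity
    have h2 := blockDist_nonneg x k n w
    rw [hqdef]
    dsimp only
    rw [← hpdef] at *
    linarith
  have hq_le1 : ∀ w, q w ≤ 1 := by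
    intro w
    have h1 : (M ^ k)⁻¹ ≤ 1 := by
      rw [inv_le_one_iff₀]
      right
      exact one_le_pow₀ hM1
    have h2 := blockDist_le_one x k n w
    rw [hqdef]
    dsimp only
    rw [← hpdef] at *
    linarith
  have hq_sum : ∑ w, q w = 1 := by
    rw [hqdef]
    dsimp only
    rw [← Finset.sum_div, Finset.sum_add_distrib, sum_blockDist x k n hNk]
    rw [Finset.sum_const, Finset.card_univ, Fintype.card_fun, Fintype.card_fin, nsmul_eq_mul]
    rw [Nat.cast_pow, ← hMdef, mul_inv_cancel₀ (by positivity)]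
    norm_num
  -- block counts and the k'-code
  set ms : ℕ → ℕ := fun s => (k' - s) / k with hmsdef
  have hms_le : ∀ s, ms s * k ≤ k' - s := fun s => Nat.div_mul_le_self _ _
  set q' : (Fin k' → 𝒳) → ℝ := fun w =>
    (∑ s ∈ Finset.range k,
      (M ^ (k' - ms s * k))⁻¹ * ∏ j ∈ Finset.range (ms s), q (subw x k (s + j * k) w)) / k
    with hq'def
  have hterm_pos : ∀ s, ∀ w : Fin k' → 𝒳,
      0 < (M ^ (k' - ms s * k))⁻¹ * ∏ j ∈ Finset.range (ms s), q (subw x k (s + j * k) w) := by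
    intro s w
    have h1 : (0:ℝ) < (M ^ (k' - ms s * k))⁻¹ := by positivity
    have h2 : 0 < ∏ j ∈ Finset.range (ms s), q (subw x k (s + j * k) w) :=
      Finset.prod_pos (fun j _ => hq_pos _)
    exact mul_pos h1 h2
  have hq'_pos : ∀ w, 0 < q' w := by
    intro w
    rw [hq'def]
    dsimp only
    apply div_pos _ hkR
    apply Finset.sum_pos (fun s _ => hterm_pos s w)
    exact ⟨0, Finset.mem_range.mpr hk⟩
  have hq'_sum : ∑ w, q' w = 1 := by
    rw [hq'def]
    dsimp only
    rw [← Finset.sum_div]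
    rw [Finset.sum_comm]
    have hterm : ∀ s ∈ Finset.range k,
        ∑ w : Fin k' → 𝒳,
          (M ^ (k' - ms s * k))⁻¹ * ∏ j ∈ Finset.range (ms s), q (subw x k (s + j * k) w)
        = 1 := by
      intro s hs
      have hsk : s < k := Finset.mem_range.mp hs
      rw [← Finset.mul_sum]
      have hble : s + ms s * k ≤ k' := by
        have := hms_le s
        omega
      rw [Pm x k hk q hq_sum (ms s) s hble]
      rw [← hMdef]
      exact inv_mul_cancel₀ (by positivity)
    rw [Finset.sum_congr rfl hterm]
    rw [Finset.sum_const, Finset.card_range, nsmul_eq_mul, mul_one]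
    exact div_self (ne_of_gt hkR)
  -- Gibbs' inequality with the code q'
  have hgibbs : Hblock x k' n ≤ ∑ w, -(blockDist x k' n w * Real.logb 2 (q' w)) :=
    gibbs (blockDist x k' n) q' (blockDist_nonneg x k' n) (sum_blockDist x k' n hN)
      hq'_pos (le_of_eq hq'_sum)
  -- rewrite as an average over the k'-blocks
  have hexp : ∑ w, -(blockDist x k' n w * Real.logb 2 (q' w))
      = (((n / k' : ℕ) : ℝ))⁻¹ *
          ∑ i ∈ Finset.range (n / k'), -Real.logb 2 (q' (blk x k' i)) := by
    rw [← sum_blockDist_mul x k' n (fun w => -Real.logb 2 (q' w))]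
    apply Finset.sum_congr rfl
    intro w _
    ring
  -- alignment offsets
  set si : ℕ → ℕ := fun i => (k - (k' * i) % k) % k with hsidef
  set gi : ℕ → ℕ := fun i => (k' * i + si i) / k with hgidef
  have hsi_lt : ∀ i, si i < k := fun i => Nat.mod_lt _ hk
  have hdvd : ∀ i, k * gi i = k' * i + si i := by
    intro i
    have h1 : k ∣ k' * i + si i := by
      have hmod := Nat.div_add_mod (k' * i) k
      rcases Nat.eq_zero_or_pos ((k' * i) % k) with hr | hr
      · refine ⟨(k' * i) / k, ?_⟩
        have hsi0 : si i = 0 := by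
          rw [hsidef]
          dsimp only
          rw [hr, Nat.sub_zero, Nat.mod_self]
        omega
      · have hrlt : (k' * i) % k < k := Nat.mod_lt _ hk
        have hsi : si i = k - (k' * i) % k := by
          rw [hsidef]
          dsimp only
          exact Nat.mod_eq_of_lt (by omega)
        refine ⟨(k' * i) / k + 1, ?_⟩
        rw [hsi, Nat.mul_add, Nat.mul_one]
        omega
    exact (Nat.mul_div_cancel' h1)
  -- identification of aligned subwords with grid blocks
  have hsub : ∀ i, ∀ j < ms (si i), subw x k (si i + j * k) (blk x k' i) = blk x k (gi i + j) := by
    intro i j hj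
    have hmsle := hms_le (si i)
    have hsilt := hsi_lt i
    have hj1 : (j + 1) * k ≤ ms (si i) * k := Nat.mul_le_mul_right k (Nat.succ_le_of_lt hj)
    have hjk : (j + 1) * k = j * k + k := by ring
    funext t
    have ht := t.isLt
    have h1 : si i + j * k + (t : ℕ) < k' := by omega
    simp only [subw, blk]
    rw [dif_pos h1]
    congr 1
    have h2 := hdvd i
    have h3 : k * (gi i + j) = k * gi i + k * j := by ring
    have h4 : j * k = k * j := by ring
    omega
  -- per-block length bound
  have hee : ∀ i, ((k' - ms (si i) * k : ℕ) : ℝ) ≤ 2 * k := by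
    intro i
    have hmod := Nat.div_add_mod (k' - si i) k
    have hrlt : (k' - si i) % k < k := Nat.mod_lt _ hk
    have hsilt := hsi_lt i
    have hmm : ms (si i) * k = k * ((k' - si i) / k) := by
      have hmseq : ms (si i) = (k' - si i) / k := rfl
      rw [hmseq]; ring
    have : (k' - ms (si i) * k) ≤ 2 * k := by omega
    exact_mod_cast this
  have hblk_bound : ∀ i ∈ Finset.range (n / k'), -Real.logb 2 (q' (blk x k' i))
      ≤ Real.logb 2 k + 2 * (k : ℝ) * Real.logb 2 M
        + ∑ j ∈ Finset.range (ms (si i)), -Real.logb 2 (q (blk x k (gi i + j))) := by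
    intro i _
    have hprodpos : 0 < ∏ j ∈ Finset.range (ms (si i)), q (blk x k (gi i + j)) :=
      Finset.prod_pos (fun j _ => hq_pos _)
    have hlow : (M ^ (k' - ms (si i) * k))⁻¹
          * (∏ j ∈ Finset.range (ms (si i)), q (blk x k (gi i + j))) / k
        ≤ q' (blk x k' i) := by
      have hsingle := Finset.single_le_sum
        (f := fun s => (M ^ (k' - ms s * k))⁻¹
          * ∏ j ∈ Finset.range (ms s), q (subw x k (s + j * k) (blk x k' i)))
        (fun s _ => (hterm_pos s (blk x k' i)).le) (Finset.mem_range.mpr (hsi_lt i))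
      have hprod : ∏ j ∈ Finset.range (ms (si i)), q (subw x k (si i + j * k) (blk x k' i))
          = ∏ j ∈ Finset.range (ms (si i)), q (blk x k (gi i + j)) :=
        Finset.prod_congr rfl (fun j hj => by rw [hsub i j (Finset.mem_range.mp hj)])
      rw [hq'def]
      dsimp only
      rw [← hprod]
      gcongr
    have hlowpos : 0 < (M ^ (k' - ms (si i) * k))⁻¹
          * (∏ j ∈ Finset.range (ms (si i)), q (blk x k (gi i + j))) / k :=
      div_pos (mul_pos (by positivity) hprodpos) hkR
    have hmono := Real.logb_le_logb_of_le one_lt_two hlowpos hlow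
    have hneg := neg_le_neg hmono
    have hprodne : ∀ j ∈ Finset.range (ms (si i)), q (blk x k (gi i + j)) ≠ 0 :=
      fun j _ => ne_of_gt (hq_pos _)
    have hcomp : -Real.logb 2 ((M ^ (k' - ms (si i) * k))⁻¹
          * (∏ j ∈ Finset.range (ms (si i)), q (blk x k (gi i + j))) / k)
        = Real.logb 2 k + ((k' - ms (si i) * k : ℕ) : ℝ) * Real.logb 2 M
          + ∑ j ∈ Finset.range (ms (si i)), -Real.logb 2 (q (blk x k (gi i + j))) := by
      rw [Real.logb_div (ne_of_gt (mul_pos (by positivity) hprodpos)) (ne_of_gt hkR)]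
      rw [Real.logb_mul (by positivity) (ne_of_gt hprodpos)]
      rw [Real.logb_inv, Real.logb_pow, Real.logb_prod _ _ hprodne]
      have hns : ∑ j ∈ Finset.range (ms (si i)), -Real.logb 2 (q (blk x k (gi i + j)))
          = -∑ j ∈ Finset.range (ms (si i)), Real.logb 2 (q (blk x k (gi i + j))) := by
        simp
      rw [hns]
      ring
    have h1 : ((k' - ms (si i) * k : ℕ) : ℝ) * Real.logb 2 M
        ≤ 2 * (k : ℝ) * Real.logb 2 M :=
      mul_le_mul_of_nonneg_right (hee i) (Real.logb_nonneg one_lt_two hM1)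
    rw [hcomp] at hneg
    linarith
  -- sum the per-block bounds
  have hsum1 : ∑ i ∈ Finset.range (n / k'), -Real.logb 2 (q' (blk x k' i))
      ≤ ((n / k' : ℕ) : ℝ) * (Real.logb 2 k + 2 * (k : ℝ) * Real.logb 2 M)
        + ∑ i ∈ Finset.range (n / k'),
            ∑ j ∈ Finset.range (ms (si i)), -Real.logb 2 (q (blk x k (gi i + j))) := by
    refine (Finset.sum_le_sum hblk_bound).trans_eq ?_
    rw [Finset.sum_add_distrib, Finset.sum_const, Finset.card_range, nsmul_eq_mul]
  have hq_nonneg_log : ∀ g : ℕ, 0 ≤ -Real.logb 2 (q (blk x k g)) := fun g =>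
    neg_nonneg.mpr (Real.logb_nonpos one_lt_two (hq_pos _).le (hq_le1 _))
  -- the aligned grid blocks are distinct blocks of the k-grid
  have hkey : ∀ i j, j < ms (si i) →
      k' * i ≤ k * (gi i + j) ∧ k * (gi i + j) + k ≤ k' * (i + 1) := by
    intro i j hj
    have h2 := hdvd i
    have h3 : k * (gi i + j) = k * gi i + k * j := by ring
    have hj1 : (j + 1) * k ≤ ms (si i) * k := Nat.mul_le_mul_right k (Nat.succ_le_of_lt hj)
    have hjk : (j + 1) * k = j * k + k := by ring
    have h4 : j * k = k * j := by ring
    have hmsle := hms_le (si i)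
    have hsilt := hsi_lt i
    have h5 : k' * (i + 1) = k' * i + k' := by ring
    constructor <;> omega
  have hinj : ∑ i ∈ Finset.range (n / k'),
        ∑ j ∈ Finset.range (ms (si i)), -Real.logb 2 (q (blk x k (gi i + j)))
      ≤ ∑ g ∈ Finset.range (n / k), -Real.logb 2 (q (blk x k g)) := by
    rw [Finset.sum_sigma' (Finset.range (n / k')) (fun i => Finset.range (ms (si i)))
      (fun i j => -Real.logb 2 (q (blk x k (gi i + j))))]
    set T := (Finset.range (n / k')).sigma (fun i => Finset.range (ms (si i))) with hTdef
    have hinj' : ∀ a ∈ T, ∀ b ∈ T,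
        (fun a : Σ _ : ℕ, ℕ => gi a.1 + a.2) a = (fun a : Σ _ : ℕ, ℕ => gi a.1 + a.2) b →
        a = b := by
      rintro ⟨i, j⟩ ha ⟨i', j'⟩ hb heq
      dsimp only at heq
      rw [hTdef, Finset.mem_sigma] at ha hb
      have hj := Finset.mem_range.mp ha.2
      have hj' := Finset.mem_range.mp hb.2
      have hk1 := hkey i j hj
      have hk2 := hkey i' j' hj'
      have d1 : (k * (gi i + j)) / k' = i :=
        Nat.div_eq_of_lt_le (by rw [Nat.mul_comm i k']; exact hk1.1)
          (by rw [Nat.mul_comm (i+1) k']; omega)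
      have d2 : (k * (gi i' + j')) / k' = i' :=
        Nat.div_eq_of_lt_le (by rw [Nat.mul_comm i' k']; exact hk2.1)
          (by rw [Nat.mul_comm (i'+1) k']; omega)
      rw [heq] at d1
      have hii : i = i' := by omega
      subst hii
      have hjj : j = j' := by omega
      subst hjj
      rfl
    refine le_trans (le_of_eq (Finset.sum_image (g := fun a : Σ _ : ℕ, ℕ => gi a.1 + a.2)
      (f := fun g => -Real.logb 2 (q (blk x k g))) hinj').symm) ?_
    apply Finset.sum_le_sum_of_subset_of_nonneg
    · intro g hg
      rw [Finset.mem_image] at hg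
      obtain ⟨⟨i, j⟩, ha, hgeq⟩ := hg
      rw [hTdef, Finset.mem_sigma] at ha
      have hj := Finset.mem_range.mp ha.2
      have hi := Finset.mem_range.mp ha.1
      have hk1 := hkey i j hj
      have h7 : k' * (i + 1) ≤ k' * (n / k') := Nat.mul_le_mul_left k' hi
      have h8 : k' * (n / k') ≤ n := by
        have h := Nat.div_mul_le_self n k'
        have h9 : k' * (n / k') = (n / k') * k' := by ring
        omega
      have h10 : (gi i + j + 1) * k ≤ n := by
        have h11 : (gi i + j + 1) * k = k * (gi i + j) + k := by ring
        omega
      have h12 : gi i + j + 1 ≤ n / k := (Nat.le_div_iff_mul_le hk).mpr h10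
      dsimp only at hgeq
      rw [Finset.mem_range]
      omega
    · intro g _ _
      exact hq_nonneg_log g
  -- the cross-entropy bound
  have hcross : ∑ g ∈ Finset.range (n / k), -Real.logb 2 (q (blk x k g))
      = ((n / k : ℕ) : ℝ) * ∑ w, p w * -Real.logb 2 (q w) := by
    have hNkR : ((n / k : ℕ) : ℝ) ≠ 0 := ne_of_gt (by exact_mod_cast hNk)
    have h := sum_blockDist_mul x k n (fun w => -Real.logb 2 (q w))
    rw [hpdef]
    rw [h, ← mul_assoc, mul_inv_cancel₀ hNkR, one_mul]
  -- the per-word cross-entropy bound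
  have hce : ∑ w, p w * -Real.logb 2 (q w) ≤ Hblock x k n + 1 := by
    have hterm : ∀ w, p w * -Real.logb 2 (q w) ≤ -(p w * Real.logb 2 (p w)) + p w := by
      intro w
      have hpw : p w = blockDist x k n w := rfl
      rcases eq_or_lt_of_le (blockDist_nonneg x k n w) with h | h
      · rw [hpw, ← h]
        simp
      · have hpos : 0 < p w := by rw [hpw]; exact h
        have h2 : p w / 2 ≤ q w := by
          rw [hqdef]
          dsimp only
          have h3 : (0:ℝ) < (M ^ k)⁻¹ := by positivity
          linarith
        have h3 : Real.logb 2 (p w / 2) ≤ Real.logb 2 (q w) :=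
          Real.logb_le_logb_of_le one_lt_two (by positivity) h2
        rw [Real.logb_div (ne_of_gt hpos) (by norm_num)] at h3
        rw [Real.logb_self_eq_one one_lt_two] at h3
        nlinarith
    have hps : ∑ w, p w = 1 := by
      rw [hpdef]
      exact sum_blockDist x k n hNk
    have hHb : Hblock x k n = ∑ w, -(p w * Real.logb 2 (p w)) := rfl
    calc ∑ w, p w * -Real.logb 2 (q w)
        ≤ ∑ w, (-(p w * Real.logb 2 (p w)) + p w) := Finset.sum_le_sum (fun w _ => hterm w)
      _ = Hblock x k n + 1 := by rw [Finset.sum_add_distrib, hps, hHb]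
  -- assemble everything
  have hchain : ∑ i ∈ Finset.range (n / k'), -Real.logb 2 (q' (blk x k' i))
      ≤ ((n / k' : ℕ) : ℝ) * (Real.logb 2 k + 2 * (k : ℝ) * Real.logb 2 M)
        + ((n / k : ℕ) : ℝ) * (Hblock x k n + 1) := by
    have h2 : ((n / k : ℕ) : ℝ) * (∑ w, p w * -Real.logb 2 (q w))
        ≤ ((n / k : ℕ) : ℝ) * (Hblock x k n + 1) :=
      mul_le_mul_of_nonneg_left hce (by positivity)
    rw [hcross] at hinj
    linarith
  have hfinal : Hblock x k' n
      ≤ (((n / k' : ℕ) : ℝ))⁻¹ * (((n / k' : ℕ) : ℝ) * (Real.logb 2 k + 2 * (k : ℝ) * Real.logb 2 M)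
        + ((n / k : ℕ) : ℝ) * (Hblock x k n + 1)) := by
    refine (hgibbs.trans_eq hexp).trans ?_
    exact mul_le_mul_of_nonneg_left hchain (by positivity)
  refine hfinal.trans_eq ?_
  field_simp

end Empirical

end Words

/-- Abstract convergence lemma: a bounded sequence satisfying the approximate
monotonicity property `u k' ≤ u k + 1/k + D k / k'` converges. -/
lemma conv (u : ℕ → ℝ) (C : ℝ) (D : ℕ → ℝ)
    (hub : ∀ k, 1 ≤ k → u k ≤ C) (hlb : ∀ k, 1 ≤ k → 0 ≤ u k)
    (hD : ∀ k, 1 ≤ k → 0 ≤ D k)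
    (key : ∀ k k', 1 ≤ k → k ≤ k' → u k' ≤ u k + 1 / (k : ℝ) + D k / (k' : ℝ)) :
    ∃ L, Tendsto u atTop (nhds L) := by
  have hb_above : IsBoundedUnder (· ≤ ·) atTop u := by
    refine ⟨C, eventually_map.mpr ?_⟩
    filter_upwards [eventually_ge_atTop 1] with k hk
    exact hub k hk
  have hb_below : IsBoundedUnder (· ≥ ·) atTop u := by
    refine ⟨0, eventually_map.mpr ?_⟩
    filter_upwards [eventually_ge_atTop 1] with k hk
    exact hlb k hk
  set L := liminf u atTop with hL
  refine ⟨L, ?_⟩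
  rw [Metric.tendsto_atTop]
  intro ε hε
  -- lower bound eventually
  have h1 : ∀ᶠ k in atTop, L - ε / 2 < u k :=
    eventually_lt_of_lt_liminf (by linarith) hb_below
  -- pick a good k₀
  have h2 : ∃ᶠ k in atTop, u k < L + ε / 4 :=
    frequently_lt_of_liminf_lt hb_above.isCoboundedUnder_ge (by linarith)
  set m₀ : ℕ := max 1 ⌈4 / ε⌉₊ with hm₀
  obtain ⟨k₀, hk₀u, hk₀m⟩ := (h2.and_eventually (eventually_ge_atTop m₀)).exists
  have hk₀1 : 1 ≤ k₀ := le_trans (le_max_left _ _) hk₀m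
  have hk₀R : (0:ℝ) < (k₀ : ℝ) := by exact_mod_cast hk₀1
  have hk₀inv : 1 / (k₀ : ℝ) ≤ ε / 4 := by
    have h3 : (⌈4 / ε⌉₊ : ℝ) ≤ (k₀ : ℝ) := by
      exact_mod_cast le_trans (le_max_right _ _) hk₀m
    have h4 : 4 / ε ≤ (k₀ : ℝ) := le_trans (Nat.le_ceil _) h3
    have h5 : 4 ≤ (k₀ : ℝ) * ε := by
      rw [div_le_iff₀ hε] at h4
      linarith
    rw [div_le_div_iff₀ hk₀R (by norm_num : (0:ℝ) < 4)]
    nlinarith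
  -- choose the cut-off
  obtain ⟨N₁, hN₁⟩ := eventually_atTop.mp h1
  set K₁ : ℕ := max k₀ ⌈4 * D k₀ / ε⌉₊ with hK₁
  refine ⟨max N₁ K₁, ?_⟩
  intro k' hk'
  have hk'N₁ : N₁ ≤ k' := le_trans (le_max_left _ _) hk'
  have hk'K₁ : K₁ ≤ k' := le_trans (le_max_right _ _) hk'
  have hk'k₀ : k₀ ≤ k' := le_trans (le_max_left _ _) hk'K₁
  have hk'1 : 1 ≤ k' := le_trans hk₀1 hk'k₀
  have hk'R : (0:ℝ) < (k' : ℝ) := by exact_mod_cast hk'1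
  have hDdiv : D k₀ / (k' : ℝ) ≤ ε / 4 := by
    have h3 : (⌈4 * D k₀ / ε⌉₊ : ℝ) ≤ (k' : ℝ) := by
      exact_mod_cast le_trans (le_max_right _ _) hk'K₁
    have h4 : 4 * D k₀ / ε ≤ (k' : ℝ) := le_trans (Nat.le_ceil _) h3
    have h5 : 4 * D k₀ ≤ (k' : ℝ) * ε := by
      rw [div_le_iff₀ hε] at h4
      linarith
    rw [div_le_div_iff₀ hk'R (by norm_num : (0:ℝ) < 4)]
    nlinarith
  have hupper : u k' < L + ε := by
    have := key k₀ k' hk₀1 hk'k₀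
    have h6 := hk₀u
    linarith
  have hlower : L - ε < u k' := by
    have := hN₁ k' hk'N₁
    linarith
  rw [Real.dist_eq, abs_sub_lt_iff]
  constructor <;> linarith

section Limits

variable {𝒳 : Type*} [Fintype 𝒳] [DecidableEq 𝒳] (x : ℕ → 𝒳)

lemma bseq_nonneg (k n : ℕ) : 0 ≤ 1 / (k : ℝ) * Hblock x k n :=
  mul_nonneg (by positivity) (Hblock_nonneg x k n)

lemma bseq_le (k n : ℕ) (hk : 0 < k) :
    1 / (k : ℝ) * Hblock x k n ≤ Real.logb 2 (Fintype.card 𝒳) := by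
  have hkR : (0:ℝ) < (k:ℝ) := by exact_mod_cast hk
  have h := Hblock_le x k n hk
  calc 1 / (k : ℝ) * Hblock x k n
      ≤ 1 / (k : ℝ) * ((k : ℝ) * Real.logb 2 (Fintype.card 𝒳)) :=
        mul_le_mul_of_nonneg_left h (by positivity)
    _ = Real.logb 2 (Fintype.card 𝒳) := by field_simp

/-- The eventual (in `n`) comparison between block entropy rates at scales `k ≤ k'`. -/
lemma event_bound {k k' : ℕ} (hk : 0 < k) (hkk : k ≤ k') (n : ℕ) (hn : k' * k' + k' ≤ n) :
    1 / (k' : ℝ) * Hblock x k' n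
      ≤ (Real.logb 2 k + 2 * (k : ℝ) * Real.logb 2 (Fintype.card 𝒳)) / (k' : ℝ)
        + (1 + 1 / (k' : ℝ)) * (1 / (k : ℝ) * Hblock x k n + 1 / (k : ℝ)) := by
  have hk' : 0 < k' := lt_of_lt_of_le hk hkk
  have hkR : (0:ℝ) < (k:ℝ) := by exact_mod_cast hk
  have hk'R : (0:ℝ) < (k':ℝ) := by exact_mod_cast hk'
  have hkk2 : k' * k' ≥ 0 := Nat.zero_le _
  have hnk' : k' ≤ n := by omega
  have hmaster := master x hk hkk hnk'
  have hN1 : k' + 1 ≤ n / k' := by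
    refine (Nat.le_div_iff_mul_le hk').mpr ?_
    have h1 : (k' + 1) * k' = k' * k' + k' := by ring
    omega
  have hnat : k * (n / k) ≤ (k' + 1) * (n / k') := by
    have h1 : n / k * k ≤ n := Nat.div_mul_le_self n k
    have h1' : k * (n / k) = n / k * k := by ring
    have hmod := Nat.div_add_mod n k'
    have hr : n % k' < k' := Nat.mod_lt _ hk'
    have h2 : (k' + 1) * (n / k') = k' * (n / k') + n / k' := by ring
    omega
  have hNR : (0:ℝ) < ((n / k' : ℕ) : ℝ) := by
    have : (0:ℕ) < n / k' := by omega
    exact_mod_cast this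
  have ht : ((n / k : ℕ) : ℝ) / ((n / k' : ℕ) : ℝ) ≤ ((k' : ℝ) + 1) / (k : ℝ) := by
    rw [div_le_div_iff₀ hNR hkR]
    have : ((k : ℕ) : ℝ) * ((n / k : ℕ) : ℝ) ≤ (((k' : ℕ) : ℝ) + 1) * ((n / k' : ℕ) : ℝ) := by
      exact_mod_cast hnat
    linarith
  set A := Real.logb 2 k + 2 * (k : ℝ) * Real.logb 2 (Fintype.card 𝒳) with hA
  set H := Hblock x k n with hH
  have hHnn : 0 ≤ H := Hblock_nonneg x k n
  have hH1 : (0:ℝ) ≤ H + 1 := by linarith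
  have e0 : 1 / (k' : ℝ) * Hblock x k' n
      ≤ 1 / (k' : ℝ) * (A + ((n / k : ℕ) : ℝ) / ((n / k' : ℕ) : ℝ) * (H + 1)) :=
    mul_le_mul_of_nonneg_left hmaster (by positivity)
  have e2 : ((n / k : ℕ) : ℝ) / ((n / k' : ℕ) : ℝ) * (H + 1)
      ≤ ((k' : ℝ) + 1) / (k : ℝ) * (H + 1) := mul_le_mul_of_nonneg_right ht hH1
  have e3 : 1 / (k' : ℝ) * (((n / k : ℕ) : ℝ) / ((n / k' : ℕ) : ℝ) * (H + 1))
      ≤ 1 / (k' : ℝ) * (((k' : ℝ) + 1) / (k : ℝ) * (H + 1)) :=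
    mul_le_mul_of_nonneg_left e2 (by positivity)
  have e4 : 1 / (k' : ℝ) * (((k' : ℝ) + 1) / (k : ℝ) * (H + 1))
      = (1 + 1 / (k' : ℝ)) * (1 / (k : ℝ) * H + 1 / (k : ℝ)) := by
    field_simp <;> ring
  have e5 : 1 / (k' : ℝ) * (A + ((n / k : ℕ) : ℝ) / ((n / k' : ℕ) : ℝ) * (H + 1))
      = A / (k' : ℝ) + 1 / (k' : ℝ) * (((n / k : ℕ) : ℝ) / ((n / k' : ℕ) : ℝ) * (H + 1)) := by
    ring
  linarith

/-- The bound function `D`. -/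
noncomputable def Dk (c : ℝ) (k : ℕ) : ℝ := Real.logb 2 k + 2 * (k : ℝ) * c + c + 1

lemma key_u {k k' : ℕ} (hk : 1 ≤ k) (hkk : k ≤ k') :
    limsup (fun n : ℕ => 1 / (k' : ℝ) * Hblock x k' n) atTop
      ≤ limsup (fun n : ℕ => 1 / (k : ℝ) * Hblock x k n) atTop
        + 1 / (k : ℝ) + Dk (Real.logb 2 (Fintype.card 𝒳)) k / (k' : ℝ) := by
  have hk' : 0 < k' := lt_of_lt_of_le hk hkk
  have hkR : (0:ℝ) < (k:ℝ) := by exact_mod_cast hk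
  have hk'R : (0:ℝ) < (k':ℝ) := by exact_mod_cast hk'
  set c := Real.logb 2 (Fintype.card 𝒳) with hc
  have hc0 : 0 ≤ c := Real.logb_nonneg one_lt_two (by exact_mod_cast card_pos_of_seq x)
  set g : ℝ → ℝ := fun t =>
    (Real.logb 2 k + 2 * (k : ℝ) * c) / (k' : ℝ) + (1 + 1 / (k' : ℝ)) * (t + 1 / (k : ℝ))
    with hg
  have hmono : Monotone g := by
    intro a b hab
    rw [hg]
    dsimp only
    have h1 : (0:ℝ) ≤ 1 + 1 / (k' : ℝ) := by positivity
    nlinarith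
  have hcont : Continuous g := by
    rw [hg]
    fun_prop
  -- boundedness facts
  have hBa : IsBoundedUnder (· ≤ ·) atTop (fun n : ℕ => 1 / (k : ℝ) * Hblock x k n) :=
    ⟨c, eventually_map.mpr (Eventually.of_forall (fun n => bseq_le x k n hk))⟩
  have hCo : IsCoboundedUnder (· ≤ ·) atTop (fun n : ℕ => 1 / (k : ℝ) * Hblock x k n) :=
    IsBoundedUnder.isCoboundedUnder_le
      ⟨0, eventually_map.mpr (Eventually.of_forall (fun n => bseq_nonneg x k n))⟩
  have hCo' : IsCoboundedUnder (· ≤ ·) atTop (fun n : ℕ => 1 / (k' : ℝ) * Hblock x k' n) :=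
    IsBoundedUnder.isCoboundedUnder_le
      ⟨0, eventually_map.mpr (Eventually.of_forall (fun n => bseq_nonneg x k' n))⟩
  have hBg : IsBoundedUnder (· ≤ ·) atTop
      ((g ∘ fun n : ℕ => 1 / (k : ℝ) * Hblock x k n)) :=
    ⟨g c, eventually_map.mpr (Eventually.of_forall (fun n => hmono (bseq_le x k n hk)))⟩
  -- eventual comparison
  have hev : ∀ᶠ n in atTop, 1 / (k' : ℝ) * Hblock x k' n
      ≤ (g ∘ fun n : ℕ => 1 / (k : ℝ) * Hblock x k n) n := by
    filter_upwards [eventually_ge_atTop (k' * k' + k')] with n hn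
    exact event_bound x hk hkk n hn
  have hle := limsup_le_limsup hev hCo' hBg
  have hmap := hmono.map_limsup_of_continuousAt (F := atTop)
    (fun n : ℕ => 1 / (k : ℝ) * Hblock x k n) (hcont.continuousAt) hBa hCo
  rw [← hmap] at hle
  set u := limsup (fun n : ℕ => 1 / (k : ℝ) * Hblock x k n) atTop with hu
  have hu_le : u ≤ c := limsup_le_of_le hCo
    (Eventually.of_forall (fun n => bseq_le x k n hk))
  have hinvk : 1 / (k : ℝ) ≤ 1 := by
    rw [div_le_one hkR]
    exact_mod_cast hk
  have hgu : g u = u + 1 / (k : ℝ)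
      + (Real.logb 2 k + 2 * (k : ℝ) * c + u + 1 / (k : ℝ)) / (k' : ℝ) := by
    rw [hg]
    dsimp only
    field_simp
    ring
  have hnum : (Real.logb 2 k + 2 * (k : ℝ) * c + u + 1 / (k : ℝ)) / (k' : ℝ)
      ≤ Dk c k / (k' : ℝ) := by
    unfold Dk
    gcongr <;> linarith
  refine hle.trans ?_
  rw [hgu]
  linarith

lemma key_v {k k' : ℕ} (hk : 1 ≤ k) (hkk : k ≤ k') :
    liminf (fun n : ℕ => 1 / (k' : ℝ) * Hblock x k' n) atTop
      ≤ liminf (fun n : ℕ => 1 / (k : ℝ) * Hblock x k n) atTop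
        + 1 / (k : ℝ) + Dk (Real.logb 2 (Fintype.card 𝒳)) k / (k' : ℝ) := by
  have hk' : 0 < k' := lt_of_lt_of_le hk hkk
  have hkR : (0:ℝ) < (k:ℝ) := by exact_mod_cast hk
  have hk'R : (0:ℝ) < (k':ℝ) := by exact_mod_cast hk'
  set c := Real.logb 2 (Fintype.card 𝒳) with hc
  have hc0 : 0 ≤ c := Real.logb_nonneg one_lt_two (by exact_mod_cast card_pos_of_seq x)
  set g : ℝ → ℝ := fun t =>
    (Real.logb 2 k + 2 * (k : ℝ) * c) / (k' : ℝ) + (1 + 1 / (k' : ℝ)) * (t + 1 / (k : ℝ))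
    with hg
  have hmono : Monotone g := by
    intro a b hab
    rw [hg]
    dsimp only
    have h1 : (0:ℝ) ≤ 1 + 1 / (k' : ℝ) := by positivity
    nlinarith
  have hcont : Continuous g := by
    rw [hg]
    fun_prop
  have hBb : IsBoundedUnder (· ≥ ·) atTop (fun n : ℕ => 1 / (k : ℝ) * Hblock x k n) :=
    ⟨0, eventually_map.mpr (Eventually.of_forall (fun n => bseq_nonneg x k n))⟩
  have hBb' : IsBoundedUnder (· ≥ ·) atTop (fun n : ℕ => 1 / (k' : ℝ) * Hblock x k' n) :=
    ⟨0, eventually_map.mpr (Eventually.of_forall (fun n => bseq_nonneg x k' n))⟩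
  have hCo : IsCoboundedUnder (· ≥ ·) atTop (fun n : ℕ => 1 / (k : ℝ) * Hblock x k n) :=
    IsBoundedUnder.isCoboundedUnder_ge
      ⟨c, eventually_map.mpr (Eventually.of_forall (fun n => bseq_le x k n hk))⟩
  have hCog : IsCoboundedUnder (· ≥ ·) atTop
      ((g ∘ fun n : ℕ => 1 / (k : ℝ) * Hblock x k n)) :=
    IsBoundedUnder.isCoboundedUnder_ge
      ⟨g c, eventually_map.mpr (Eventually.of_forall (fun n => hmono (bseq_le x k n hk)))⟩
  have hev : ∀ᶠ n in atTop, 1 / (k' : ℝ) * Hblock x k' n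
      ≤ (g ∘ fun n : ℕ => 1 / (k : ℝ) * Hblock x k n) n := by
    filter_upwards [eventually_ge_atTop (k' * k' + k')] with n hn
    exact event_bound x hk hkk n hn
  have hle := liminf_le_liminf hev hBb' hCog
  have hmap := hmono.map_liminf_of_continuousAt (F := atTop)
    (fun n : ℕ => 1 / (k : ℝ) * Hblock x k n) (hcont.continuousAt) hCo hBb
  rw [← hmap] at hle
  set u := liminf (fun n : ℕ => 1 / (k : ℝ) * Hblock x k n) atTop with hu
  have hu_le : u ≤ c := liminf_le_of_frequently_le
    (Frequently.of_forall (fun n => bseq_le x k n hk)) hBb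
  have hu_nn : 0 ≤ u := le_liminf_of_le hCo
    (Eventually.of_forall (fun n => bseq_nonneg x k n))
  have hinvk : 1 / (k : ℝ) ≤ 1 := by
    rw [div_le_one hkR]
    exact_mod_cast hk
  have hgu : g u = u + 1 / (k : ℝ)
      + (Real.logb 2 k + 2 * (k : ℝ) * c + u + 1 / (k : ℝ)) / (k' : ℝ) := by
    rw [hg]
    dsimp only
    field_simp
    ring
  have hnum : (Real.logb 2 k + 2 * (k : ℝ) * c + u + 1 / (k : ℝ)) / (k' : ℝ)
      ≤ Dk c k / (k' : ℝ) := by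
    unfold Dk
    gcongr <;> linarith
  refine hle.trans ?_
  rw [hgu]
  linarith

end Limits

end LemmaFive


/-- The paper's Lemma 5 (Appendix A): for any sequence over a finite alphabet, the limits
`lim_{k→∞} limsup_{n→∞} (1/k) Ĥ^k(x^n)` and `lim_{k→∞} liminf_{n→∞} (1/k) Ĥ^k(x^n)`
both exist. -/
theorem block_empirical_entropy_limits_exist {𝒳 : Type*} [Fintype 𝒳] [DecidableEq 𝒳]
    (x : ℕ → 𝒳) :
    (∃ Lsup : ℝ, Tendsto
      (fun k : ℕ => limsup (fun n : ℕ => (1 / (k : ℝ)) * Hblock x k n) atTop) atTop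
      (nhds Lsup))
    ∧ (∃ Linf : ℝ, Tendsto
      (fun k : ℕ => liminf (fun n : ℕ => (1 / (k : ℝ)) * Hblock x k n) atTop) atTop
      (nhds Linf)) := by
  set c := Real.logb 2 (Fintype.card 𝒳) with hc
  have hc0 : 0 ≤ c := Real.logb_nonneg one_lt_two
    (by exact_mod_cast LemmaFive.card_pos_of_seq x)
  have hD : ∀ k, 1 ≤ k → 0 ≤ LemmaFive.Dk c k := by
    intro k hk
    unfold LemmaFive.Dk
    have h1 : 0 ≤ Real.logb 2 k := Real.logb_nonneg one_lt_two (by exact_mod_cast hk)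
    positivity
  constructor
  · apply LemmaFive.conv _ c (LemmaFive.Dk c)
    · intro k hk
      exact limsup_le_of_le
        (IsBoundedUnder.isCoboundedUnder_le
          ⟨0, eventually_map.mpr (Eventually.of_forall fun n => LemmaFive.bseq_nonneg x k n)⟩)
        (Eventually.of_forall fun n => LemmaFive.bseq_le x k n hk)
    · intro k hk
      exact le_limsup_of_frequently_le
        (Frequently.of_forall fun n => LemmaFive.bseq_nonneg x k n)
        ⟨c, eventually_map.mpr (Eventually.of_forall fun n => LemmaFive.bseq_le x k n hk)⟩
    · exact hD
    · intro k k' hk hkk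
      exact LemmaFive.key_u x hk hkk
  · apply LemmaFive.conv _ c (LemmaFive.Dk c)
    · intro k hk
      exact liminf_le_of_frequently_le
        (Frequently.of_forall fun n => LemmaFive.bseq_le x k n hk)
        ⟨0, eventually_map.mpr (Eventually.of_forall fun n => LemmaFive.bseq_nonneg x k n)⟩
    · intro k hk
      exact le_liminf_of_le
        (IsBoundedUnder.isCoboundedUnder_ge
          ⟨c, eventually_map.mpr (Eventually.of_forall fun n => LemmaFive.bseq_le x k n hk)⟩)
        (Eventually.of_forall fun n => LemmaFive.bseq_nonneg x k n)
    · exact hD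
    · intro k k' hk hkk
      exact LemmaFive.key_v x hk hkk
end
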